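/- arXiv:2308.01580 — 5 statements merged into one kernel-verified Lean document; each statement's English description precedes it below -/
import Mathlib

section
/- For every η > 0 there exists N₀ such that for every integer N ≥ N₀, setting h = 1/N, the discrete Hardy constant satisfies S_h ≥ 1/4 + π²/(6 + |log h|)² − η/(log h)². -/
open MeasureTheory Real Set Filter

noncomputable section

/-- Membership in the finite element space `V_h` with `h = 1/N`: continuous on `[0,1]`
and affine on each mesh interval `[k/N, (k+1)/N]`. -/
def MemVh (N : ℕ) (v : ℝ → ℝ) : Prop :=
  ContinuousOn v (Set.Icc 0 1) ∧
  ∀ k : ℕ, k < N → ∃ a b : ℝ,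
    ∀ x ∈ Set.Icc ((k : ℝ) / (N : ℝ)) (((k : ℝ) + 1) / (N : ℝ)), v x = a * x + b

/-- The discrete Hardy constant `S_h` for the uniform mesh of size `h = 1/N`. -/
def Sdisc (N : ℕ) : ℝ :=
  sInf { s : ℝ | ∃ v : ℝ → ℝ, MemVh N v ∧ v 0 = 0 ∧ (∃ x ∈ Set.Icc (0:ℝ) 1, v x ≠ 0) ∧
    s = (∫ x in (0:ℝ)..1, (deriv v x) ^ 2) / (∫ x in (0:ℝ)..1, (v x) ^ 2 / x ^ 2) }

/- ### Auxiliary trigonometric estimates -/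

lemma key_trig {y : ℝ} (hy : 0 < y) (hy1 : y ≤ 1) :
    y * Real.cos y ≤ (1 - y^2/4) * Real.sin y := by
  have hy2 : 0 ≤ 1 - y^2 := by nlinarith
  have h8 : y^3 ≤ y := by nlinarith [mul_nonneg hy.le hy2]
  have h1 : y/2 - (y/2)^3/4 < Real.sin (y/2) := by
    have := Real.sin_gt_sub_cube (x := y/2) (by linarith); nlinarith [pow_pos hy 3]
  have h2 : y - y^3/4 < Real.sin y := by
    have := Real.sin_gt_sub_cube hy; nlinarith [pow_pos hy 3]
  have hc : Real.cos y = 1 - 2 * Real.sin (y/2)^2 := by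
    have h := Real.cos_two_mul (y/2)
    have h' := Real.sin_sq_add_cos_sq (y/2)
    have hyy : (2:ℝ) * (y/2) = y := by ring
    rw [hyy] at h
    nlinarith
  have hq0 : 0 < y/2 - (y/2)^3/4 := by nlinarith
  have hq : (y/2 - (y/2)^3/4)^2 < Real.sin (y/2)^2 := by nlinarith
  have hA : y * Real.cos y < y - 2*y*(y/2 - (y/2)^3/4)^2 := by
    rw [hc]
    nlinarith [mul_pos hy (sub_pos.2 hq)]
  have hB : (1 - y^2/4) * (y - y^3/4) ≤ (1-y^2/4) * Real.sin y :=
    mul_le_mul_of_nonneg_left h2.le (by nlinarith)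
  have hC : y - 2*y*(y/2 - (y/2)^3/4)^2 ≤ (1 - y^2/4) * (y - y^3/4) := by
    nlinarith [pow_nonneg hy.le 7]
  linarith

lemma key_trig' {y : ℝ} (hy : 0 < y) (hy1 : y ≤ 1) : y * Real.cos y ≤ Real.sin y := by
  have h := key_trig hy hy1
  have h2 : y - y^3/4 < Real.sin y := by
    have := Real.sin_gt_sub_cube hy; nlinarith [pow_pos hy 3]
  have hy2 : 0 ≤ 1 - y^2 := by nlinarith
  have h8 : y^3 ≤ y := by nlinarith [mul_nonneg hy.le hy2]
  have hs : 0 < Real.sin y := by nlinarith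
  nlinarith [mul_pos (mul_pos hy hy) hs]

/- ### The ground state ratio `R = φ'/φ` for `φ(x) = √x · sin(π θ(x))` -/

def thf (L x : ℝ) : ℝ := (Real.log x + L + 4)/(L+6)

def Rf (L x : ℝ) : ℝ :=
  (1/2 + (π/(L+6)) * (Real.cos (π * thf L x) / Real.sin (π * thf L x))) / x

lemma sin_thf_pos {L x : ℝ} (h0 : 0 < thf L x) (h1 : thf L x < 1) :
    0 < Real.sin (π * thf L x) :=
  Real.sin_pos_of_pos_of_lt_pi (by positivity) (by nlinarith [Real.pi_pos])

lemma hasDerivAt_Rf {L x : ℝ} (hL6 : 0 < L + 6) (hx : 0 < x)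
    (h0 : 0 < thf L x) (h1 : thf L x < 1) :
    HasDerivAt (Rf L) (-((1/4 + (π/(L+6))^2)/x^2) - (Rf L x)^2) x := by
  have hS := sin_thf_pos h0 h1
  have hθ : HasDerivAt (fun y => thf L y) (x⁻¹/(L+6)) x := by
    have := ((Real.hasDerivAt_log hx.ne').add_const (L+4)).div_const (L+6)
    convert this using 2
    · rfl
    · rfl
    · simp [thf] <;> ring
  have hπθ : HasDerivAt (fun y => π * thf L y) (π * (x⁻¹/(L+6))) x := hθ.const_mul π
  have hsin : HasDerivAt (fun y => Real.sin (π * thf L y))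
      (Real.cos (π * thf L x) * (π * (x⁻¹/(L+6)))) x := hπθ.sin
  have hcos : HasDerivAt (fun y => Real.cos (π * thf L y))
      (-Real.sin (π * thf L x) * (π * (x⁻¹/(L+6)))) x := hπθ.cos
  have hquot : HasDerivAt (fun y => Real.cos (π * thf L y) / Real.sin (π * thf L y))
      ((-Real.sin (π * thf L x) * (π * (x⁻¹/(L+6))) * Real.sin (π * thf L x)
        - Real.cos (π * thf L x) * (Real.cos (π * thf L x) * (π * (x⁻¹/(L+6)))))
        / (Real.sin (π * thf L x))^2) x := hcos.div hsin hS.ne'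
  have hnum : HasDerivAt (fun y => 1/2 + (π/(L+6)) * (Real.cos (π * thf L y) / Real.sin (π * thf L y)))
      ((π/(L+6)) * ((-Real.sin (π * thf L x) * (π * (x⁻¹/(L+6))) * Real.sin (π * thf L x)
        - Real.cos (π * thf L x) * (Real.cos (π * thf L x) * (π * (x⁻¹/(L+6)))))
        / (Real.sin (π * thf L x))^2)) x := (hquot.const_mul _).const_add _
  have hR := hnum.div (hasDerivAt_id x) hx.ne'
  convert hR using 1
  · rfl
  · rfl
  · rfl
  have h6 := hL6.ne'
  unfold Rf
  simp only [id]
  field_simp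
  ring

/- ### Integral of `(ax+b)²/x²` and the per-cell ground-state inequality -/

lemma int_affine_div_sq {α β a b : ℝ} (hα : 0 < α) (hαβ : α ≤ β) :
    ∫ x in α..β, (a*x+b)^2/x^2
      = (a^2*β + 2*a*b*Real.log β - b^2/β) - (a^2*α + 2*a*b*Real.log α - b^2/α) := by
  have hicc : Set.uIcc α β = Set.Icc α β := Set.uIcc_of_le hαβ
  have hG : ∀ x ∈ Set.uIcc α β, HasDerivAt (fun y => a^2*y + 2*a*b*Real.log y - b^2/y)
      ((a*x+b)^2/x^2) x := by
    intro x hx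
    rw [hicc] at hx
    have hxpos : 0 < x := lt_of_lt_of_le hα hx.1
    have h := (((hasDerivAt_id x).const_mul (a^2)).add
        ((Real.hasDerivAt_log hxpos.ne').const_mul (2*a*b))).sub
        ((hasDerivAt_inv hxpos.ne').const_mul (b^2))
    convert h using 1
    · rfl
    · rfl
    · funext y; simp [div_eq_mul_inv]
    field_simp
    ring
  have hcont : ContinuousOn (fun x => (a*x+b)^2/x^2) (Set.uIcc α β) := by
    rw [hicc]
    apply ContinuousOn.div
    · fun_prop
    · fun_prop
    · intro x hx
      exact pow_ne_zero 2 (lt_of_lt_of_le hα hx.1).ne'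
  exact intervalIntegral.integral_eq_sub_of_hasDerivAt hG (hcont.intervalIntegrable)

lemma contOn_Rf {L α β : ℝ} (hL6 : 0 < L + 6) (hα : 0 < α)
    (hθ : ∀ x ∈ Set.Icc α β, 0 < thf L x ∧ thf L x < 1) :
    ContinuousOn (Rf L) (Set.Icc α β) := fun x hx =>
  ((hasDerivAt_Rf hL6 (lt_of_lt_of_le hα hx.1) (hθ x hx).1 (hθ x hx).2).continuousAt).continuousWithinAt

lemma cell_key {L α β a b : ℝ} (hL6 : 0 < L + 6) (hα : 0 < α) (hαβ : α ≤ β)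
    (hθ : ∀ x ∈ Set.Icc α β, 0 < thf L x ∧ thf L x < 1) :
    (a*β+b)^2 * Rf L β - (a*α+b)^2 * Rf L α
      ≤ a^2*(β-α) - (1/4 + (π/(L+6))^2) * ∫ x in α..β, (a*x+b)^2/x^2 := by
  set lam : ℝ := 1/4 + (π/(L+6))^2 with hlam
  have hicc : Set.uIcc α β = Set.Icc α β := Set.uIcc_of_le hαβ
  set W : ℝ → ℝ := fun y => a^2*y - lam*(a^2*y + 2*a*b*Real.log y - b^2/y)
      - (a*y+b)^2 * Rf L y with hW
  have hWd : ∀ x ∈ Set.uIcc α β, HasDerivAt W ((a - (a*x+b) * Rf L x)^2) x := by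
    intro x hx
    rw [hicc] at hx
    have hxpos : 0 < x := lt_of_lt_of_le hα hx.1
    have hG : HasDerivAt (fun y => a^2*y + 2*a*b*Real.log y - b^2/y)
        (a^2*1 + 2*a*b*x⁻¹ - b^2 * -(x^2)⁻¹) x :=
      (((hasDerivAt_id x).const_mul (a^2)).add
        ((Real.hasDerivAt_log hxpos.ne').const_mul (2*a*b))).sub
        ((hasDerivAt_inv hxpos.ne').const_mul (b^2))
    have hQ : HasDerivAt (fun y => (a*y+b)^2) (2*(a*x+b)*a) x := by
      have h := (((hasDerivAt_id x).const_mul a).add_const b).pow 2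
      convert h using 1
      · rfl
      · rfl
      · funext y; simp
      · simp <;> ring
    have hR := hasDerivAt_Rf hL6 hxpos (hθ x hx).1 (hθ x hx).2
    rw [← hlam] at hR
    have h := (((hasDerivAt_id x).const_mul (a^2)).sub (hG.const_mul lam)).sub (hQ.mul hR)
    clear_value lam
    convert h using 1
    · rfl
    · rfl
    · rfl
    have hx2 : (x:ℝ)^2 ≠ 0 := pow_ne_zero 2 hxpos.ne'
    field_simp
    ring
  have hRcont := contOn_Rf hL6 hα hθ
  have hW'cont : ContinuousOn (fun x => (a - (a*x+b) * Rf L x)^2) (Set.Icc α β) := by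
    apply ContinuousOn.pow
    exact continuousOn_const.sub
      (((continuous_const.mul continuous_id).add continuous_const).continuousOn.mul hRcont)
  have hint : IntervalIntegrable (fun x => (a - (a*x+b) * Rf L x)^2) volume α β := by
    rw [← hicc] at hW'cont
    exact hW'cont.intervalIntegrable
  have heq := intervalIntegral.integral_eq_sub_of_hasDerivAt hWd hint
  have hnn : 0 ≤ ∫ x in α..β, (a - (a*x+b) * Rf L x)^2 :=
    intervalIntegral.integral_nonneg hαβ (fun u _ => sq_nonneg _)
  have hWmono : W α ≤ W β := by linarith [heq ▸ hnn]
  rw [int_affine_div_sq hα hαβ]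
  simp only [hW] at hWmono
  linarith

/- ### Integrals of the discrete function over single cells -/

lemma deriv_ae {v : ℝ → ℝ} {α β a b : ℝ} (hαβ : α ≤ β)
    (hv : ∀ x ∈ Set.Icc α β, v x = a*x+b) :
    ∀ᵐ x : ℝ ∂volume, x ∈ Set.uIoc α β → (deriv v x)^2 = a^2 := by
  have hioo : ∀ x ∈ Set.Ioo α β, deriv v x = a := by
    intro x hx
    have hev : (fun y => a*y+b) =ᶠ[nhds x] v := by
      filter_upwards [Ioo_mem_nhds hx.1 hx.2] with y hy
      exact (hv y (Set.Ioo_subset_Icc_self hy)).symm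
    rw [← hev.deriv_eq]
    have h := (((hasDerivAt_id x).const_mul a).add_const b).deriv
    simpa using h
  rw [ae_iff]
  refine measure_mono_null ?_ (volume_singleton (a := β))
  intro x hx
  simp only [Set.mem_setOf_eq, not_forall] at hx
  obtain ⟨hmem, hne⟩ := hx
  rw [Set.uIoc_of_le hαβ] at hmem
  by_contra hxβ
  exact hne (by rw [hioo x ⟨hmem.1, lt_of_le_of_ne hmem.2 (fun h => hxβ (by simp [h]))⟩])

lemma cell_num {v : ℝ → ℝ} {α β a b : ℝ} (hαβ : α ≤ β)
    (hv : ∀ x ∈ Set.Icc α β, v x = a*x+b) :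
    IntervalIntegrable (fun x => (deriv v x)^2) volume α β ∧
      (∫ x in α..β, (deriv v x)^2) = a^2*(β-α) := by
  have hae := deriv_ae hαβ hv
  have haer : (fun _ : ℝ => a^2) =ᵐ[volume.restrict (Set.uIoc α β)] (fun x => (deriv v x)^2) :=
    ((ae_restrict_iff' measurableSet_uIoc).2 hae).mono (fun x h => h.symm)
  constructor
  · rw [intervalIntegrable_iff]
    exact (integrableOn_const measure_Ioc_lt_top.ne).congr haer
  · rw [intervalIntegral.integral_congr_ae (hae.mono (fun x h hx => h hx))]
    simp [smul_eq_mul, mul_comm]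

lemma cell_den {v : ℝ → ℝ} {α β a b : ℝ} (hα : 0 < α) (hαβ : α ≤ β)
    (hv : ∀ x ∈ Set.Icc α β, v x = a*x+b) :
    IntervalIntegrable (fun x => (v x)^2/x^2) volume α β ∧
      (∫ x in α..β, (v x)^2/x^2) = ∫ x in α..β, (a*x+b)^2/x^2 := by
  have hicc : Set.uIcc α β = Set.Icc α β := Set.uIcc_of_le hαβ
  have heq : Set.EqOn (fun x => (v x)^2/x^2) (fun x => (a*x+b)^2/x^2) (Set.uIcc α β) := by
    intro x hx
    rw [hicc] at hx
    simp only
    rw [hv x hx]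
  have hcont : ContinuousOn (fun x => (a*x+b)^2/x^2) (Set.uIcc α β) := by
    rw [hicc]
    apply ContinuousOn.div
    · fun_prop
    · fun_prop
    · intro x hx
      exact pow_ne_zero 2 (lt_of_lt_of_le hα hx.1).ne'
  constructor
  · refine (hcont.intervalIntegrable).congr ?_
    intro x hx
    exact (heq (Set.uIoc_subset_uIcc hx)).symm
  · exact intervalIntegral.integral_congr heq

lemma cell0_den {v : ℝ → ℝ} {β a : ℝ} (hβ : 0 ≤ β)
    (hv : ∀ x ∈ Set.Icc 0 β, v x = a*x) :
    IntervalIntegrable (fun x => (v x)^2/x^2) volume 0 β ∧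
      (∫ x in (0:ℝ)..β, (v x)^2/x^2) = a^2*β := by
  have hioc : Set.uIoc 0 β = Set.Ioc 0 β := Set.uIoc_of_le hβ
  have heq : ∀ x ∈ Set.uIoc (0:ℝ) β, (v x)^2/x^2 = a^2 := by
    intro x hx
    rw [hioc] at hx
    rw [hv x ⟨hx.1.le, hx.2⟩]
    have hx0 : x ≠ 0 := hx.1.ne'
    field_simp
  have haer : (fun _ : ℝ => a^2) =ᵐ[volume.restrict (Set.uIoc 0 β)] (fun x => (v x)^2/x^2) :=
    ((ae_restrict_iff' measurableSet_uIoc).2 (Filter.Eventually.of_forall heq)).mono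
      (fun x h => h.symm)
  constructor
  · rw [intervalIntegrable_iff]
    exact (integrableOn_const measure_Ioc_lt_top.ne).congr haer
  · rw [intervalIntegral.integral_congr_ae (Filter.Eventually.of_forall (fun x hx => heq x hx))]
    simp [smul_eq_mul, mul_comm]

lemma aux_sumsq_pos {p q : ℝ} (h : p ≠ 0 ∨ q ≠ 0) : 0 < p^2 + p*q + q^2 := by
  rcases h with h | h
  · have hp : 0 < p^2 := by positivity
    nlinarith [sq_nonneg (p+q), sq_nonneg q]
  · have hq : 0 < q^2 := by positivity
    nlinarith [sq_nonneg (p+q), sq_nonneg p]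

/- ### Main theorem -/

set_option maxHeartbeats 2000000 in
/-- Lower bound: `S_h ≥ 1/4 + π²/(6 + |log h|)² − η/(log h)²` for all small enough `h = 1/N`. -/
theorem discrete_hardy_lower_bound :
    ∀ η : ℝ, 0 < η → ∃ N₀ : ℕ, ∀ N : ℕ, N₀ ≤ N →
      Sdisc N ≥ 1/4 + π ^ 2 / (6 + |Real.log (1 / (N : ℝ))|) ^ 2
        - η / (Real.log (1 / (N : ℝ))) ^ 2 := by
  intro η hη
  refine ⟨2187, fun N hN => ?_⟩
  have h0N : 0 < N := by omega
  have hNR : (0:ℝ) < N := by exact_mod_cast h0N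
  have hNne : (N:ℝ) ≠ 0 := ne_of_gt hNR
  set L : ℝ := Real.log N with hLdef
  have hlog3 : (1:ℝ) ≤ Real.log 3 := by
    rw [Real.le_log_iff_exp_le (by norm_num : (0:ℝ) < 3)]
    have := Real.exp_one_lt_d9
    linarith
  have hL7 : 7 ≤ L := by
    have h2187 : (7:ℝ) ≤ Real.log 2187 := by
      have h : (2187:ℝ) = 3^7 := by norm_num
      rw [h, Real.log_pow]
      push_cast
      linarith
    refine le_trans h2187 (Real.log_le_log (by norm_num) ?_)
    exact_mod_cast hN
  have hL6 : 0 < L + 6 := by linarith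
  have hpi : (3:ℝ) < π ∧ π < 3.15 := ⟨Real.pi_gt_three, Real.pi_lt_d2⟩
  have hlog1N : Real.log (1/(N:ℝ)) = -L := by rw [one_div, Real.log_inv]
  set lam : ℝ := 1/4 + (π/(L+6))^2 with hlam
  -- it suffices to show that `lam ≤ Sdisc N`
  have hRHS : 1/4 + π ^ 2 / (6 + |Real.log (1 / (N : ℝ))|) ^ 2
      - η / (Real.log (1 / (N : ℝ))) ^ 2 ≤ lam := by
    rw [hlog1N, abs_neg, abs_of_nonneg (by linarith : (0:ℝ) ≤ L)]
    have h1 : π^2/(6+L)^2 = (π/(L+6))^2 := by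
      rw [div_pow]
      have : (6+L)^2 = (L+6)^2 := by ring
      rw [this]
    have h2 : 0 < η/(-L)^2 := by
      apply div_pos hη
      nlinarith
    rw [h1]
    rw [hlam]
    linarith
  -- the two trig quantities
  set P : ℝ := π/(L+6) with hP
  have hPpos : 0 < P := div_pos (by linarith) hL6
  have hu : 0 < 2*P ∧ 2*P ≤ 1 := by
    refine ⟨by linarith, ?_⟩
    have h : 2*P = (2*π)/(L+6) := by rw [hP]; ring
    rw [h, div_le_one hL6]
    nlinarith
  have hw : 0 < 4*P ∧ 4*P ≤ 1 := by
    refine ⟨by linarith, ?_⟩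
    have h : 4*P = (4*π)/(L+6) := by rw [hP]; ring
    rw [h, div_le_one hL6]
    nlinarith
  -- `Rf` at the point 1
  have hRf1 : 0 ≤ Rf L 1 := by
    have hθ1 : π * thf L 1 = π - 2*P := by
      rw [thf, Real.log_one, hP]
      field_simp
      ring
    have hsinu : 0 < Real.sin (2*P) :=
      Real.sin_pos_of_pos_of_lt_pi hu.1 (by nlinarith)
    have hkey := key_trig' hu.1 hu.2
    rw [Rf, hθ1, Real.cos_pi_sub, Real.sin_pi_sub]
    rw [div_one]
    have h2 : P * (-Real.cos (2*P) / Real.sin (2*P)) = -((P * Real.cos (2*P)) / Real.sin (2*P)) := by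
      ring
    rw [h2]
    have h3 : (P * Real.cos (2*P)) / Real.sin (2*P) ≤ 1/2 := by
      rw [div_le_iff₀ hsinu]
      nlinarith
    linarith
  -- `Rf` at the point 1/N
  have hthf1N : π * thf L (1/(N:ℝ)) = 4*P := by
    rw [thf, hlog1N, hP]
    field_simp
    ring
  have hsinw : 0 < Real.sin (4*P) :=
    Real.sin_pos_of_pos_of_lt_pi hw.1 (by nlinarith)
  have hRfN : Rf L (1/(N:ℝ)) = (1/2 + P * (Real.cos (4*P) / Real.sin (4*P))) * N := by
    rw [Rf, hthf1N, hP]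
    field_simp
  have hbracket : 1/2 + P * (Real.cos (4*P) / Real.sin (4*P)) ≤ 1 - lam := by
    have hkey := key_trig hw.1 hw.2
    have h3 : P * Real.cos (4*P) / Real.sin (4*P) ≤ 1/4 - P^2 := by
      rw [div_le_iff₀ hsinw]
      nlinarith
    rw [hlam]
    rw [mul_div_assoc] at h3
    linarith
  -- nodes
  set n : ℕ → ℝ := fun k => (k:ℝ)/N with hn
  have hn0 : n 0 = 0 := by simp [hn]
  have hnN : n N = 1 := by
    simp only [hn]
    field_simp
  have hn1 : n 1 = 1/(N:ℝ) := by simp [hn]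
  have hn1pos : 0 < n 1 := by rw [hn1]; positivity
  have hmono : ∀ k : ℕ, n k ≤ n (k+1) := by
    intro k
    simp only [hn]
    have h : ((k:ℕ):ℝ) ≤ ((k+1:ℕ):ℝ) := by push_cast; linarith
    exact (div_le_div_iff_of_pos_right hNR).2 h
  -- θ bounds on [1/N, 1]
  have hth : ∀ x : ℝ, n 1 ≤ x → x ≤ 1 → 0 < thf L x ∧ thf L x < 1 := by
    intro x h1 h2
    have hx0 : 0 < x := lt_of_lt_of_le hn1pos h1
    have hlow : -L ≤ Real.log x := by
      rw [← hlog1N]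
      apply Real.log_le_log (by positivity)
      rw [← hn1]; exact h1
    have hup : Real.log x ≤ 0 := Real.log_nonpos hx0.le h2
    constructor
    · rw [thf]; apply div_pos (by linarith) hL6
    · rw [thf, div_lt_one hL6]; linarith
  -- the proof that every Rayleigh quotient is at least `lam`
  have hmain : ∀ s ∈ { s : ℝ | ∃ v : ℝ → ℝ, MemVh N v ∧ v 0 = 0 ∧
      (∃ x ∈ Set.Icc (0:ℝ) 1, v x ≠ 0) ∧
      s = (∫ x in (0:ℝ)..1, (deriv v x) ^ 2) / (∫ x in (0:ℝ)..1, (v x) ^ 2 / x ^ 2) },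
      lam ≤ s := by
    rintro s ⟨v, ⟨-, haff⟩, hv0, ⟨x₀, hx₀, hvx₀⟩, rfl⟩
    choose A B hAB using haff
    have hcellv : ∀ (k : ℕ) (hk : k < N), ∀ x ∈ Set.Icc (n k) (n (k+1)),
        v x = A k hk * x + B k hk := by
      intro k hk x hx
      apply hAB k hk
      have e1 : ((k:ℝ)+1)/(N:ℝ) = n (k+1) := by
        simp only [hn]; push_cast; ring
      rw [e1]
      exact ⟨hx.1, hx.2⟩
    set a0 : ℝ := A 0 h0N with ha0
    have hB0 : B 0 h0N = 0 := by
      have h := hAB 0 h0N 0 (by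
        rw [Set.mem_Icc]
        refine ⟨by simp, by positivity⟩)
      rw [hv0] at h
      simpa using h.symm
    have hv_cell0 : ∀ x ∈ Set.Icc (0:ℝ) (n 1), v x = a0 * x := by
      intro x hx
      have := hcellv 0 h0N x (by rw [hn0]; exact hx)
      rw [this, hB0, ha0]
      ring
    have hv_cell0' : ∀ x ∈ Set.Icc (0:ℝ) (n 1), v x = a0 * x + 0 := by
      intro x hx; rw [hv_cell0 x hx]; ring
    have hmono0 : (0:ℝ) ≤ n 1 := hn1pos.le
    -- bounds of cells
    have hcell_le1 : ∀ k : ℕ, k < N → n (k+1) ≤ 1 := by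
      intro k hk
      simp only [hn]
      rw [div_le_one hNR]
      push_cast
      have : (k:ℝ) + 1 ≤ N := by exact_mod_cast Nat.succ_le_of_lt hk
      linarith
    have hcell_ge : ∀ k : ℕ, 1 ≤ k → n 1 ≤ n k := by
      intro k hk
      simp only [hn]
      apply (div_le_div_iff_of_pos_right hNR).2
      exact_mod_cast hk
    -- integrability on each cell
    have hnum_int : ∀ k, k < N →
        IntervalIntegrable (fun x => (deriv v x)^2) volume (n k) (n (k+1)) :=
      fun k hk => (cell_num (hmono k) (hcellv k hk)).1
    have hden_int : ∀ k, k < N →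
        IntervalIntegrable (fun x => (v x)^2/x^2) volume (n k) (n (k+1)) := by
      intro k hk
      rcases Nat.eq_zero_or_pos k with h0 | hpos
      · subst h0
        rw [hn0]
        exact (cell0_den hmono0 hv_cell0).1
      · have hα : 0 < n k := by
          simp only [hn]
          apply div_pos _ hNR
          exact_mod_cast hpos
        exact (cell_den hα (hmono k) (hcellv k hk)).1
    -- total integrals decompose into sums over cells
    have hnum_sum : ∑ k ∈ Finset.range N, ∫ x in n k..n (k+1), (deriv v x)^2
        = ∫ x in (0:ℝ)..1, (deriv v x)^2 := by
      have h := intervalIntegral.sum_integral_adjacent_intervals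
        (a := n) (μ := volume) (f := fun x => (deriv v x)^2) (fun k hk => hnum_int k hk)
      rw [hn0, hnN] at h
      exact h
    have hden_sum : ∑ k ∈ Finset.range N, ∫ x in n k..n (k+1), (v x)^2/x^2
        = ∫ x in (0:ℝ)..1, (v x)^2/x^2 := by
      have h := intervalIntegral.sum_integral_adjacent_intervals
        (a := n) (μ := volume) (f := fun x => (v x)^2/x^2) (fun k hk => hden_int k hk)
      rw [hn0, hnN] at h
      exact h
    -- the telescoping quantity
    set T : ℕ → ℝ := fun k => (v (n k))^2 * Rf L (n k) with hT
    have hcell_ineq : ∀ k ∈ Finset.Ico 1 N, T (k+1) - T k ≤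
        (∫ x in n k..n (k+1), (deriv v x)^2) - lam * ∫ x in n k..n (k+1), (v x)^2/x^2 := by
      intro k hk
      rw [Finset.mem_Ico] at hk
      have hα : 0 < n k := lt_of_lt_of_le hn1pos (hcell_ge k hk.1)
      have hθc : ∀ x ∈ Set.Icc (n k) (n (k+1)), 0 < thf L x ∧ thf L x < 1 := by
        intro x hx
        exact hth x (le_trans (hcell_ge k hk.1) hx.1) (le_trans hx.2 (hcell_le1 k hk.2))
      have hkey := cell_key (a := A k hk.2) (b := B k hk.2) hL6 hα (hmono k) hθc
      rw [← hlam] at hkey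
      have hnumval := (cell_num (hmono k) (hcellv k hk.2)).2
      have hdenval := (cell_den hα (hmono k) (hcellv k hk.2)).2
      rw [hnumval, hdenval]
      have hTk : T k = (A k hk.2 * n k + B k hk.2)^2 * Rf L (n k) := by
        simp only [hT]
        rw [hcellv k hk.2 (n k) ⟨le_refl _, hmono k⟩]
      have hTk1 : T (k+1) = (A k hk.2 * n (k+1) + B k hk.2)^2 * Rf L (n (k+1)) := by
        simp only [hT]
        rw [hcellv k hk.2 (n (k+1)) ⟨hmono k, le_refl _⟩]
      rw [hTk, hTk1]
      exact hkey
    -- telescoping sum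
    have htel : ∑ k ∈ Finset.Ico 1 N, (T (k+1) - T k) = T N - T 1 := by
      rw [Finset.sum_Ico_eq_sum_range]
      have hcongr : ∀ i ∈ Finset.range (N-1),
          T (1+i+1) - T (1+i) = (fun j => T (j+1)) (i+1) - (fun j => T (j+1)) i := by
        intro i _
        simp only
        rw [show 1+i+1 = i+1+1 from by omega, show 1+i = i+1 from by omega]
      rw [Finset.sum_congr rfl hcongr, Finset.sum_range_sub (fun j => T (j+1)) (N-1)]
      rw [show N-1+1 = N from by omega]
    -- sum of the per-cell inequalities
    have hsum_ineq : T N - T 1 ≤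
        ∑ k ∈ Finset.Ico 1 N, ((∫ x in n k..n (k+1), (deriv v x)^2)
          - lam * ∫ x in n k..n (k+1), (v x)^2/x^2) := by
      rw [← htel]
      exact Finset.sum_le_sum hcell_ineq
    -- value of the 0-th cell
    have hf0 : (∫ x in (n 0)..(n 1), (deriv v x)^2) - lam * ∫ x in (n 0)..(n 1), (v x)^2/x^2
        = (1 - lam) * (a0^2 * n 1) := by
      rw [hn0]
      rw [(cell_num (v := v) (α := 0) (β := n 1) (a := a0) (b := 0) hmono0 hv_cell0').2]
      rw [(cell0_den hmono0 hv_cell0).2]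
      ring
    -- the splitting of the full sum
    have hsplit : (∫ x in (0:ℝ)..1, (deriv v x)^2) - lam * ∫ x in (0:ℝ)..1, (v x)^2/x^2
        = ((∫ x in (n 0)..(n 1), (deriv v x)^2) - lam * ∫ x in (n 0)..(n 1), (v x)^2/x^2)
          + ∑ k ∈ Finset.Ico 1 N, ((∫ x in n k..n (k+1), (deriv v x)^2)
            - lam * ∫ x in n k..n (k+1), (v x)^2/x^2) := by
      rw [← hnum_sum, ← hden_sum, Finset.mul_sum, ← Finset.sum_sub_distrib]
      rw [Finset.range_eq_Ico, Finset.sum_eq_sum_Ico_succ_bot h0N]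
    -- lower bounds on the boundary terms
    have hTN : 0 ≤ T N := by
      simp only [hT]
      rw [hnN]
      exact mul_nonneg (sq_nonneg _) hRf1
    have hT1 : T 1 = a0^2 * n 1 * (1/2 + P * (Real.cos (4*P) / Real.sin (4*P))) := by
      simp only [hT]
      rw [hv_cell0 (n 1) ⟨hmono0, le_refl _⟩]
      rw [hn1, hRfN]
      field_simp
    have hcore : 0 ≤ (∫ x in (0:ℝ)..1, (deriv v x)^2)
        - lam * ∫ x in (0:ℝ)..1, (v x)^2/x^2 := by
      rw [hsplit, hf0]
      set SS : ℝ := ∑ k ∈ Finset.Ico 1 N, ((∫ x in n k..n (k+1), (deriv v x)^2)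
        - lam * ∫ x in n k..n (k+1), (v x)^2/x^2) with hSS
      have h1 : T 1 ≤ (1 - lam) * (a0^2 * n 1) := by
        rw [hT1]
        have hnn : 0 ≤ a0^2 * n 1 := by positivity
        calc a0^2 * n 1 * (1/2 + P * (Real.cos (4*P) / Real.sin (4*P)))
            ≤ a0^2 * n 1 * (1 - lam) := mul_le_mul_of_nonneg_left hbracket hnn
          _ = (1 - lam) * (a0^2 * n 1) := by ring
      linarith [hsum_ineq, hTN, h1]
    -- positivity of the denominator
    have hx₀0 : 0 < x₀ := by
      rcases lt_or_eq_of_le hx₀.1 with h | h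
      · exact h
      · exact absurd (h ▸ hv0) hvx₀
    set c : ℕ := ⌈x₀ * N⌉₊ with hc
    have hc1 : 1 ≤ c := Nat.ceil_pos.2 (by positivity)
    have hcN : c ≤ N := Nat.ceil_le.2 (by
      calc x₀ * N ≤ 1 * N := mul_le_mul_of_nonneg_right hx₀.2 hNR.le
        _ = (N:ℝ) := by rw [one_mul])
    set k₀ : ℕ := c - 1 with hk₀
    have hk₀N : k₀ < N := by omega
    have hcastk₀ : (k₀:ℝ) = (c:ℝ) - 1 := by
      rw [hk₀]
      push_cast [Nat.cast_sub hc1]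
      ring
    have hx₀cell : x₀ ∈ Set.Icc (n k₀) (n (k₀+1)) := by
      constructor
      · have h := Nat.ceil_lt_add_one (by positivity : (0:ℝ) ≤ x₀ * N)
        rw [← hc] at h
        simp only [hn]
        rw [div_le_iff₀ hNR, hcastk₀]
        linarith
      · have h := Nat.le_ceil (x₀ * N)
        rw [← hc] at h
        simp only [hn]
        rw [le_div_iff₀ hNR]
        have heq : ((k₀:ℝ)+1) = (c:ℝ) := by rw [hcastk₀]; ring
        push_cast
        rw [heq]
        linarith
    have hcellpos : 0 < ∫ x in n k₀..n (k₀+1), (v x)^2/x^2 := by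
      have hvk := hcellv k₀ hk₀N
      set a : ℝ := A k₀ hk₀N with ha
      set b : ℝ := B k₀ hk₀N with hb
      have hicck : Set.uIcc (n k₀) (n (k₀+1)) = Set.Icc (n k₀) (n (k₀+1)) :=
        Set.uIcc_of_le (hmono k₀)
      have hcont2 : ContinuousOn (fun x => (a*x+b)^2) (Set.uIcc (n k₀) (n (k₀+1))) := by
        fun_prop
      have hint1 : IntervalIntegrable (fun x => (v x)^2) volume (n k₀) (n (k₀+1)) := by
        refine (hcont2.intervalIntegrable).congr ?_
        intro x hx
        have hx' := Set.uIoc_subset_uIcc hx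
        rw [hicck] at hx'
        simp only
        rw [hvk x hx']
      have hstep1 : ∫ x in n k₀..n (k₀+1), (v x)^2 ≤ ∫ x in n k₀..n (k₀+1), (v x)^2/x^2 := by
        apply intervalIntegral.integral_mono_on (hmono k₀) hint1 (hden_int k₀ hk₀N)
        intro x hx
        have hx0' : 0 ≤ x := le_trans (by positivity : (0:ℝ) ≤ n k₀) hx.1
        rcases eq_or_lt_of_le hx0' with h | h
        · rw [← h, hv0]
          norm_num
        · have hx1 : x ≤ 1 := le_trans hx.2 (hcell_le1 k₀ hk₀N)
          rw [le_div_iff₀ (by positivity : (0:ℝ) < x^2)]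
          have hx2le : x^2 ≤ 1 := by
            calc x^2 ≤ 1^2 := pow_le_pow_left₀ hx0' hx1 2
              _ = 1 := one_pow 2
          exact mul_le_of_le_one_right (sq_nonneg _) hx2le
      have hstep2 : ∫ x in n k₀..n (k₀+1), (v x)^2 = ∫ x in n k₀..n (k₀+1), (a*x+b)^2 := by
        apply intervalIntegral.integral_congr
        intro x hx
        rw [hicck] at hx
        simp only
        rw [hvk x hx]
      have hstep3 : ∫ x in n k₀..n (k₀+1), (a*x+b)^2
          = (a^2*(n (k₀+1))^3/3 + a*b*(n (k₀+1))^2 + b^2*(n (k₀+1)))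
            - (a^2*(n k₀)^3/3 + a*b*(n k₀)^2 + b^2*(n k₀)) := by
        apply intervalIntegral.integral_eq_sub_of_hasDerivAt
          (f := fun y => a^2*y^3/3 + a*b*y^2 + b^2*y)
        · intro x hx
          have h := (((hasDerivAt_pow 3 x).const_mul (a^2/3)).add
            ((hasDerivAt_pow 2 x).const_mul (a*b))).add ((hasDerivAt_id x).const_mul (b^2))
          convert h using 1
          · funext y; simp; ring
          · simp; ring
        · exact (Continuous.continuousOn (by continuity)).intervalIntegrable
      set p : ℝ := a * n k₀ + b with hp
      set q : ℝ := a * n (k₀+1) + b with hq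
      have hgap : n (k₀+1) - n k₀ = 1/N := by
        simp only [hn]
        push_cast
        field_simp
        ring
      have hvx₀' : a * x₀ + b ≠ 0 := by rw [← hvk x₀ hx₀cell]; exact hvx₀
      have hsumpos : 0 < p^2 + p*q + q^2 := by
        apply aux_sumsq_pos
        by_contra hcon
        push_neg at hcon
        obtain ⟨hp0, hq0⟩ := hcon
        have ha0' : a = 0 := by
          have h1 : q - p = a * (n (k₀+1) - n k₀) := by rw [hp, hq]; ring
          rw [hp0, hq0, hgap] at h1
          have h2 : a * ((1:ℝ)/N) = 0 := by rw [← h1]; ring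
          have h3 : (1:ℝ)/N ≠ 0 := by positivity
          exact (mul_eq_zero.1 h2).resolve_right h3
        have hb0' : b = 0 := by
          have hbp : a * n k₀ + b = 0 := by rw [← hp]; exact hp0
          rw [ha0'] at hbp
          simpa using hbp
        exact hvx₀' (by rw [ha0', hb0']; ring)
      have hval : ∫ x in n k₀..n (k₀+1), (a*x+b)^2
          = (n (k₀+1) - n k₀) * (p^2+p*q+q^2)/3 := by
        rw [hstep3, hp, hq]
        ring
      have hpos2 : 0 < (n (k₀+1) - n k₀) * (p^2+p*q+q^2)/3 := by
        rw [hgap]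
        positivity
      have hposv : 0 < ∫ x in n k₀..n (k₀+1), (v x)^2 := by
        rw [hstep2, hval]; exact hpos2
      exact lt_of_lt_of_le hposv hstep1
    have hDen : 0 < ∫ x in (0:ℝ)..1, (v x)^2/x^2 := by
      rw [← hden_sum]
      refine Finset.sum_pos' (fun k _ => ?_) ⟨k₀, Finset.mem_range.2 hk₀N, hcellpos⟩
      exact intervalIntegral.integral_nonneg (hmono k) (fun u _ => by positivity)
    -- conclude
    rw [le_div_iff₀ hDen]
    linarith [hcore]
  -- nonemptiness of the set
  have hne : { s : ℝ | ∃ v : ℝ → ℝ, MemVh N v ∧ v 0 = 0 ∧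
      (∃ x ∈ Set.Icc (0:ℝ) 1, v x ≠ 0) ∧
      s = (∫ x in (0:ℝ)..1, (deriv v x) ^ 2) / (∫ x in (0:ℝ)..1, (v x) ^ 2 / x ^ 2) }.Nonempty := by
    refine ⟨_, fun x => x, ⟨continuousOn_id, fun k _ => ⟨1, 0, fun x _ => by ring⟩⟩,
      rfl, ⟨1, by norm_num, by norm_num⟩, rfl⟩
  have hfin : lam ≤ Sdisc N := le_csInf hne hmain
  rw [ge_iff_le]
  exact le_trans hRHS hfin


end
end

section
/- Let 0 < h < 1 and let δ_h > 0 satisfy 1/4 + δ_h·tan(arctan(1/(2δ_h)) + δ_h·log h) − δ_h² = 0 with arctan(1/(2δ_h)) + δ_h·log h ∈ (−π/2, π/2). Then μ_h = 1/4 + δ_h². -/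
open MeasureTheory Real Set Filter

noncomputable section

/-- `u ∈ H¹(0,1)` with weak derivative `u'`: `u` is continuous on `[0,1]`,
`u'` is (square-)integrable on `(0,1)`, and `u(x) = u(0) + ∫₀ˣ u'`. -/
def IsH1 (u u' : ℝ → ℝ) : Prop :=
  ContinuousOn u (Set.Icc 0 1) ∧
  IntervalIntegrable u' volume 0 1 ∧
  IntegrableOn (fun t => u' t ^ 2) (Set.Ioo 0 1) ∧
  ∀ x ∈ Set.Icc (0:ℝ) 1, u x = u 0 + ∫ t in (0:ℝ)..x, u' t

/-- `u ∈ U_h` (with weak derivative `u'`): `u ∈ H¹(0,1)`, `u(0) = 0`, and `u` is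
affine on `[0,h]`, i.e. `u(x) = (x/h)·u(h)` there. -/
def MemUh (h : ℝ) (u u' : ℝ → ℝ) : Prop :=
  IsH1 u u' ∧ u 0 = 0 ∧ ∀ x ∈ Set.Icc (0:ℝ) h, u x = (x / h) * u h

/-- `μ_h`: the infimum of the Hardy Rayleigh quotient over nonzero members of `U_h`. -/
def muh (h : ℝ) : ℝ :=
  sInf { s : ℝ | ∃ u u' : ℝ → ℝ, MemUh h u u' ∧ (∃ x ∈ Set.Icc (0:ℝ) 1, u x ≠ 0) ∧
    s = (∫ x in (0:ℝ)..1, (u' x) ^ 2) / (∫ x in (0:ℝ)..1, (u x) ^ 2 / x ^ 2) }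

set_option linter.unusedSectionVars false
set_option linter.unusedVariables false

lemma swap_aux {a b : ℝ} (hab : a ≤ b) {w k : ℝ → ℝ}
    (hw : IntegrableOn w (Set.Ioc a b)) (hk : IntegrableOn k (Set.Ioc a b)) :
    ∫ x in a..b, k x * (∫ t in a..x, w t) = ∫ t in a..b, (∫ x in t..b, k x) * w t := by
  set f : ℝ → ℝ → ℝ := fun x t => if t ≤ x then k x * w t else 0 with hf
  have hmeas : MeasurableSet {p : ℝ × ℝ | p.2 ≤ p.1} :=
    (isClosed_le continuous_snd continuous_fst).measurableSet
  have hint : Integrable (Function.uncurry f)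
      ((volume.restrict (Set.Ioc a b)).prod (volume.restrict (Set.Ioc a b))) := by
    have h1 : Integrable (fun p : ℝ × ℝ => k p.1 * w p.2)
        ((volume.restrict (Set.Ioc a b)).prod (volume.restrict (Set.Ioc a b))) :=
      hk.mul_prod hw
    have : Function.uncurry f = Set.indicator {p : ℝ × ℝ | p.2 ≤ p.1}
        (fun p : ℝ × ℝ => k p.1 * w p.2) := by
      ext p
      by_cases hp : p.2 ≤ p.1 <;>
        simp [Function.uncurry, hf, hp, Set.indicator_of_mem, Set.indicator_of_notMem,
          Set.mem_setOf_eq]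
    rw [this]
    exact h1.indicator hmeas
  have swap := MeasureTheory.integral_integral_swap hint
  have hL : ∫ x in Set.Ioc a b, (∫ t in Set.Ioc a b, f x t) =
      ∫ x in a..b, k x * (∫ t in a..x, w t) := by
    rw [intervalIntegral.integral_of_le hab]
    refine setIntegral_congr_fun measurableSet_Ioc (fun x hx => ?_)
    have : (fun t => f x t) = Set.indicator (Set.Iic x) (fun t => k x * w t) := by
      ext t; by_cases ht : t ≤ x <;>
        simp [hf, ht, Set.indicator_of_mem, Set.indicator_of_notMem]
    rw [this, setIntegral_indicator measurableSet_Iic]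
    have hset : Set.Ioc a b ∩ Set.Iic x = Set.Ioc a x := by
      ext t; simp only [Set.mem_inter_iff, Set.mem_Ioc, Set.mem_Iic]
      exact ⟨fun ⟨⟨h1, h2⟩, h3⟩ => ⟨h1, h3⟩, fun ⟨h1, h3⟩ => ⟨⟨h1, h3.trans hx.2⟩, h3⟩⟩
    rw [hset, intervalIntegral.integral_of_le hx.1.le, MeasureTheory.integral_const_mul]
  have hR : ∫ t in Set.Ioc a b, (∫ x in Set.Ioc a b, f x t) =
      ∫ t in a..b, (∫ x in t..b, k x) * w t := by
    rw [intervalIntegral.integral_of_le hab]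
    refine setIntegral_congr_fun measurableSet_Ioc (fun t ht => ?_)
    have : (fun x => f x t) = Set.indicator (Set.Ici t) (fun x => k x * w t) := by
      ext x; by_cases hx : t ≤ x <;>
        simp [hf, hx, Set.indicator_of_mem, Set.indicator_of_notMem]
    rw [this, setIntegral_indicator measurableSet_Ici]
    have hset : Set.Ioc a b ∩ Set.Ici t = Set.Icc t b := by
      ext x; simp only [Set.mem_inter_iff, Set.mem_Ioc, Set.mem_Icc, Set.mem_Ici]
      exact ⟨fun ⟨⟨h1, h2⟩, h3⟩ => ⟨h3, h2⟩, fun ⟨h1, h2⟩ => ⟨⟨lt_of_lt_of_le ht.1 h1, h2⟩, h1⟩⟩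
    rw [hset, MeasureTheory.integral_Icc_eq_integral_Ioc,
      MeasureTheory.integral_mul_const, ← intervalIntegral.integral_of_le ht.2]
  rw [← hL, ← hR]; exact swap

lemma ibp_primitive {a b : ℝ} (hab : a ≤ b) {w f f' : ℝ → ℝ}
    (hw : IntegrableOn w (Set.Ioc a b))
    (hf : ∀ x ∈ Set.Icc a b, HasDerivAt f (f' x) x)
    (hf' : ContinuousOn f' (Set.Icc a b)) :
    ∫ x in a..b, f' x * (∫ t in a..x, w t)
      = f b * (∫ t in a..b, w t) - ∫ t in a..b, f t * w t := by
  have hfc : ContinuousOn f (Set.Icc a b) := fun x hx => (hf x hx).continuousAt.continuousWithinAt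
  have hk : IntegrableOn f' (Set.Ioc a b) :=
    (hf'.integrableOn_Icc).mono_set Set.Ioc_subset_Icc_self
  have hwI : IntervalIntegrable w volume a b := by
    rw [intervalIntegrable_iff_integrableOn_Ioc_of_le hab]; exact hw
  rw [swap_aux hab hw hk]
  have h1 : ∀ t ∈ Set.Ioc a b, (∫ x in t..b, f' x) * w t = (f b - f t) * w t := by
    intro t ht
    congr 1
    apply intervalIntegral.integral_eq_sub_of_hasDerivAt
    · intro x hx
      rw [Set.uIcc_of_le ht.2] at hx
      exact hf x ⟨ht.1.le.trans hx.1, hx.2⟩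
    · apply ContinuousOn.intervalIntegrable
      rw [Set.uIcc_of_le ht.2]
      exact hf'.mono (Set.Icc_subset_Icc ht.1.le le_rfl)
  have h2 : ∫ t in a..b, (∫ x in t..b, f' x) * w t = ∫ t in a..b, (f b - f t) * w t := by
    rw [intervalIntegral.integral_of_le hab, intervalIntegral.integral_of_le hab]
    exact setIntegral_congr_fun measurableSet_Ioc h1
  rw [h2]
  have hfw : IntervalIntegrable (fun t => f t * w t) volume a b := by
    apply hwI.continuousOn_mul; rwa [Set.uIcc_of_le hab]
  have hbw : IntervalIntegrable (fun t => f b * w t) volume a b := hwI.const_mul _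
  have : ∀ t, (f b - f t) * w t = f b * w t - f t * w t := fun t => by ring
  simp_rw [this]
  rw [intervalIntegral.integral_sub hbw hfw, intervalIntegral.integral_const_mul]

lemma primitive_continuousOn {a b : ℝ} (hab : a ≤ b) {w : ℝ → ℝ}
    (hw : IntegrableOn w (Set.Ioc a b)) :
    ContinuousOn (fun t => ∫ s in a..t, w s) (Set.Icc a b) := by
  have := intervalIntegral.continuousOn_primitive_interval
      (f := w) (μ := volume) (a := a) (b := b) ?_
  · rwa [Set.uIcc_of_le hab] at this
  · rw [Set.uIcc_of_le hab, ← integrableOn_Icc_iff_integrableOn_Ioc] at *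
    exact hw

lemma primitive_sq {a b : ℝ} (hab : a ≤ b) {w : ℝ → ℝ} (hw : IntegrableOn w (Set.Ioc a b)) :
    ∀ x ∈ Set.Icc a b, (∫ t in a..x, w t)^2 = ∫ t in a..x, 2 * (w t * (∫ s in a..t, w s)) := by
  intro x hx
  have hax : a ≤ x := hx.1
  have hw' : IntegrableOn w (Set.Ioc a x) := hw.mono_set (Set.Ioc_subset_Ioc le_rfl hx.2)
  have hwI : IntervalIntegrable w volume a x := by
    rw [intervalIntegrable_iff_integrableOn_Ioc_of_le hax]; exact hw'
  have key := swap_aux hax hw' hw'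
  have h1 : ∀ t ∈ Set.Ioc a x, (∫ s in t..x, w s) * w t
      = (∫ s in a..x, w s) * w t - w t * (∫ s in a..t, w s) := by
    intro t ht
    have hadd : (∫ s in a..t, w s) + (∫ s in t..x, w s) = ∫ s in a..x, w s := by
      apply intervalIntegral.integral_add_adjacent_intervals
      · rw [intervalIntegrable_iff_integrableOn_Ioc_of_le ht.1.le]
        exact hw'.mono_set (Set.Ioc_subset_Ioc le_rfl ht.2)
      · rw [intervalIntegrable_iff_integrableOn_Ioc_of_le ht.2]
        exact hw'.mono_set (Set.Ioc_subset_Ioc ht.1.le le_rfl)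
    linear_combination w t * hadd
  have h2 : ∫ t in a..x, (∫ s in t..x, w s) * w t
      = ∫ t in a..x, ((∫ s in a..x, w s) * w t - w t * (∫ s in a..t, w s)) := by
    rw [intervalIntegral.integral_of_le hax, intervalIntegral.integral_of_le hax]
    exact setIntegral_congr_fun measurableSet_Ioc h1
  have hU : ContinuousOn (fun t => ∫ s in a..t, w s) (Set.Icc a x) :=
    primitive_continuousOn hax hw'
  have hUw : IntervalIntegrable (fun t => w t * (∫ s in a..t, w s)) volume a x := by
    apply hwI.mul_continuousOn; rwa [Set.uIcc_of_le hax]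
  have hcw : IntervalIntegrable (fun t => (∫ s in a..x, w s) * w t) volume a x :=
    hwI.const_mul _
  rw [h2, intervalIntegral.integral_sub hcw hUw, intervalIntegral.integral_const_mul] at key
  rw [intervalIntegral.integral_const_mul]
  have hkey2 : ∫ t in a..x, w t * (∫ s in a..t, w s)
      = (∫ s in a..x, w s)^2 - ∫ t in a..x, w t * (∫ s in a..t, w s) := by
    have : (fun t => w t * ∫ s in a..t, w s) = (fun t => w t * ∫ t_1 in a..t, w t_1) := rfl
    nlinarith [key]
  linarith [hkey2]

/-- Key quadratic integration-by-parts identity: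
`∫ (2 g u w + g' u²) = [g u²]` for `u = u a + ∫ w`. -/
lemma ibp_quadratic {a b : ℝ} (hab : a ≤ b) {w g gd u : ℝ → ℝ}
    (hg : ∀ x ∈ Set.Icc a b, HasDerivAt g (gd x) x)
    (hgd : ContinuousOn gd (Set.Icc a b))
    (hw : IntegrableOn w (Set.Ioc a b))
    (hu : ∀ x ∈ Set.Icc a b, u x = u a + ∫ t in a..x, w t) :
    ∫ x in a..b, (2 * g x * u x * w x + gd x * u x ^ 2)
      = g b * u b ^ 2 - g a * u a ^ 2 := by
  set U : ℝ → ℝ := fun x => ∫ t in a..x, w t with hU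
  set c : ℝ := u a with hc
  have hgc : ContinuousOn g (Set.Icc a b) := fun x hx => (hg x hx).continuousAt.continuousWithinAt
  have hUc : ContinuousOn U (Set.Icc a b) := primitive_continuousOn hab hw
  have hwI : IntervalIntegrable w volume a b := by
    rw [intervalIntegrable_iff_integrableOn_Ioc_of_le hab]; exact hw
  have huIcc : Set.uIcc a b = Set.Icc a b := Set.uIcc_of_le hab
  -- integrabilities
  have hgw : IntervalIntegrable (fun x => g x * w x) volume a b := by
    apply hwI.continuousOn_mul; rwa [huIcc]
  have hgUw : IntervalIntegrable (fun x => g x * U x * w x) volume a b := by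
    apply hwI.continuousOn_mul; rw [huIcc]; exact hgc.mul hUc
  have hgdI : IntervalIntegrable gd volume a b := by
    apply ContinuousOn.intervalIntegrable; rwa [huIcc]
  have hgdU : IntervalIntegrable (fun x => gd x * U x) volume a b := by
    apply ContinuousOn.intervalIntegrable; rw [huIcc]; exact hgd.mul hUc
  have hgdU2 : IntervalIntegrable (fun x => gd x * U x ^ 2) volume a b := by
    apply ContinuousOn.intervalIntegrable; rw [huIcc]; exact hgd.mul (hUc.pow 2)
  -- Step 1: rewrite the integrand using u = c + U on Icc
  have step1 : ∫ x in a..b, (2 * g x * u x * w x + gd x * u x ^ 2)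
      = ∫ x in a..b, ((2*c) * (g x * w x) + 2 * (g x * U x * w x)
          + c^2 * gd x + (2*c) * (gd x * U x) + gd x * U x ^ 2) := by
    apply intervalIntegral.integral_congr
    intro x hx
    rw [huIcc] at hx
    have h := hu x hx
    show 2 * g x * u x * w x + gd x * u x ^ 2 = _
    rw [h]; ring
  -- Step 2: split
  have step2 : ∫ x in a..b, ((2*c) * (g x * w x) + 2 * (g x * U x * w x)
          + c^2 * gd x + (2*c) * (gd x * U x) + gd x * U x ^ 2)
      = (2*c) * (∫ x in a..b, g x * w x) + 2 * (∫ x in a..b, g x * U x * w x)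
        + c^2 * (∫ x in a..b, gd x) + (2*c) * (∫ x in a..b, gd x * U x)
        + ∫ x in a..b, gd x * U x ^ 2 := by
    rw [intervalIntegral.integral_add (((((hgw.const_mul _).add
      (hgUw.const_mul _)).add (hgdI.const_mul _)).add (hgdU.const_mul _))) hgdU2,
      intervalIntegral.integral_add ((((hgw.const_mul _).add
      (hgUw.const_mul _)).add (hgdI.const_mul _))) (hgdU.const_mul _),
      intervalIntegral.integral_add (((hgw.const_mul _).add
      (hgUw.const_mul _))) (hgdI.const_mul _),
      intervalIntegral.integral_add ((hgw.const_mul _)) (hgUw.const_mul _),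
      intervalIntegral.integral_const_mul, intervalIntegral.integral_const_mul,
      intervalIntegral.integral_const_mul, intervalIntegral.integral_const_mul]
  -- Step 3: evaluate pieces
  have e1 : ∫ x in a..b, gd x = g b - g a :=
    intervalIntegral.integral_eq_sub_of_hasDerivAt (fun x hx => hg x (huIcc ▸ hx)) hgdI
  have e2 : ∫ x in a..b, gd x * U x = g b * U b - ∫ x in a..b, g x * w x :=
    ibp_primitive hab hw hg hgd
  have e3 : ∫ x in a..b, gd x * U x ^ 2
      = g b * U b ^ 2 - 2 * ∫ x in a..b, g x * U x * w x := by
    have hw2 : IntegrableOn (fun t => 2 * (w t * U t)) (Set.Ioc a b) := by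
      have : IntervalIntegrable (fun t => 2 * (w t * U t)) volume a b := by
        apply IntervalIntegrable.const_mul
        apply hwI.mul_continuousOn; rwa [huIcc]
      rwa [intervalIntegrable_iff_integrableOn_Ioc_of_le hab] at this
    have congr1 : ∫ x in a..b, gd x * U x ^ 2
        = ∫ x in a..b, gd x * (∫ t in a..x, 2 * (w t * U t)) := by
      apply intervalIntegral.integral_congr
      intro x hx
      rw [huIcc] at hx
      show gd x * (∫ t in a..x, w t) ^ 2 = _
      rw [primitive_sq hab hw x hx]
    rw [congr1, ibp_primitive hab hw2 hg hgd, ← primitive_sq hab hw b ⟨hab, le_rfl⟩]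
    have : ∫ t in a..b, g t * (2 * (w t * U t)) = 2 * ∫ x in a..b, g x * U x * w x := by
      rw [← intervalIntegral.integral_const_mul]
      apply intervalIntegral.integral_congr
      intro x _; ring
    rw [this]
  have hub : u b = c + U b := hu b ⟨hab, le_rfl⟩
  rw [step1, step2, e1, e2, e3, hub]
  ring

def th (δ x : ℝ) : ℝ := Real.arctan (1/(2*δ)) + δ * Real.log x
def pphi (δ x : ℝ) : ℝ := Real.sqrt x * Real.cos (th δ x)
def pphid (δ x : ℝ) : ℝ := (Real.cos (th δ x) / 2 - δ * Real.sin (th δ x)) * (Real.sqrt x)⁻¹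

lemma hasDerivAt_th (δ : ℝ) {x : ℝ} (hx : 0 < x) : HasDerivAt (th δ) (δ / x) x := by
  have h1 : HasDerivAt (fun y : ℝ => δ * Real.log y) (δ * x⁻¹) x :=
    (Real.hasDerivAt_log hx.ne').const_mul δ
  have h2 := h1.const_add (Real.arctan (1/(2*δ)))
  have h3 : th δ = fun y => Real.arctan (1/(2*δ)) + δ * Real.log y := rfl
  rw [h3, div_eq_mul_inv]
  exact h2

lemma hasDerivAt_pphi (δ : ℝ) {x : ℝ} (hx : 0 < x) : HasDerivAt (pphi δ) (pphid δ x) x := by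
  have hs := Real.hasDerivAt_sqrt hx.ne'
  have hc : HasDerivAt (fun y => Real.cos (th δ y)) (-Real.sin (th δ x) * (δ / x)) x :=
    (hasDerivAt_th δ hx).cos
  have hmul : HasDerivAt (fun y => Real.sqrt y * Real.cos (th δ y)) _ x := hs.mul hc
  have h3 : pphi δ = fun y => Real.sqrt y * Real.cos (th δ y) := rfl
  rw [h3]
  convert hmul using 1
  rw [pphid]
  set c := Real.cos (th δ x)
  set s := Real.sin (th δ x)
  have hsq : Real.sqrt x ^ 2 = x := Real.sq_sqrt hx.le
  have hne : Real.sqrt x ≠ 0 := (Real.sqrt_pos.2 hx).ne'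
  have hx0 : x ≠ 0 := hx.ne'
  field_simp
  linear_combination (2*δ*s) * hsq

lemma hasDerivAt_pphid (δ : ℝ) {x : ℝ} (hx : 0 < x) :
    HasDerivAt (pphid δ) (-((1/4+δ^2) * pphi δ x / x^2)) x := by
  have hne : Real.sqrt x ≠ 0 := (Real.sqrt_pos.2 hx).ne'
  have hnum : HasDerivAt (fun y => Real.cos (th δ y) / 2 - δ * Real.sin (th δ y))
      (-Real.sin (th δ x) * (δ / x) / 2 - δ * (Real.cos (th δ x) * (δ / x))) x :=
    (((hasDerivAt_th δ hx).cos).div_const 2).sub (((hasDerivAt_th δ hx).sin).const_mul δ)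
  have hinv : HasDerivAt (fun y => (Real.sqrt y)⁻¹) (-(1 / (2 * Real.sqrt x)) / (Real.sqrt x)^2) x :=
    (Real.hasDerivAt_sqrt hx.ne').inv hne
  have hmul : HasDerivAt (fun y => (Real.cos (th δ y) / 2 - δ * Real.sin (th δ y)) * (Real.sqrt y)⁻¹) _ x :=
    hnum.mul hinv
  have h3 : pphid δ = fun y => (Real.cos (th δ y) / 2 - δ * Real.sin (th δ y)) * (Real.sqrt y)⁻¹ :=
    rfl
  rw [h3]
  convert hmul using 1
  rw [pphi]
  set c := Real.cos (th δ x)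
  set s := Real.sin (th δ x)
  have hsq : Real.sqrt x ^ 2 = x := Real.sq_sqrt hx.le
  have hx0 : x ≠ 0 := hx.ne'
  field_simp
  linear_combination (-4*c*(Real.sqrt x^2+x) - 16*δ^2*c*Real.sqrt x^2 + 8*δ*s*x) * hsq

lemma hasDerivAt_g (δ : ℝ) {x : ℝ} (hx : 0 < x) (hφ : pphi δ x ≠ 0) :
    HasDerivAt (fun y => pphid δ y / pphi δ y)
      (-(1/4+δ^2)/x^2 - (pphid δ x / pphi δ x)^2) x := by
  have hd : HasDerivAt (fun y => pphid δ y / pphi δ y) _ x := (hasDerivAt_pphid δ hx).div (hasDerivAt_pphi δ hx) hφ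
  convert hd using 1
  have hx0 : x ≠ 0 := hx.ne'
  field_simp

section hyps
variable {h δ : ℝ} (hh0 : 0 < h) (hh1 : h < 1) (hδ : 0 < δ)
  (hang : Real.arctan (1 / (2 * δ)) + δ * Real.log h ∈ Set.Ioo (-(π/2)) (π/2))

include hh0 hδ hang in
lemma cos_th_pos : ∀ x ∈ Set.Icc h 1, 0 < Real.cos (th δ x) := by
  intro x hx
  have hx0 : 0 < x := lt_of_lt_of_le hh0 hx.1
  apply Real.cos_pos_of_mem_Ioo
  constructor
  · have h1 : Real.log h ≤ Real.log x := Real.log_le_log hh0 hx.1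
    have h2 : δ * Real.log h ≤ δ * Real.log x := by nlinarith
    have := hang.1
    simp only [th]
    linarith
  · have h1 : Real.log x ≤ 0 := Real.log_nonpos hx0.le hx.2
    have h2 : δ * Real.log x ≤ 0 := by nlinarith
    have h3 : Real.arctan (1/(2*δ)) < π/2 := Real.arctan_lt_pi_div_two _
    simp only [th]
    linarith

include hh0 hδ hang in
lemma pphi_pos : ∀ x ∈ Set.Icc h 1, 0 < pphi δ x := by
  intro x hx
  have hx0 : 0 < x := lt_of_lt_of_le hh0 hx.1
  exact mul_pos (Real.sqrt_pos.2 hx0) (cos_th_pos hh0 hδ hang x hx)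

lemma pphid_one (hδ : 0 < δ) : pphid δ 1 = 0 := by
  have h1 : th δ 1 = Real.arctan (1/(2*δ)) := by simp [th]
  rw [pphid, h1, Real.sin_arctan, Real.cos_arctan]
  have hz : (0:ℝ) < Real.sqrt (1 + (1/(2*δ))^2) := by positivity
  field_simp
  ring

include hδ in
lemma pphid_h (heq : 1/4 + δ * Real.tan (Real.arctan (1 / (2 * δ)) + δ * Real.log h) - δ ^ 2 = 0)
    (hcos : 0 < Real.cos (th δ h)) (hh0 : 0 < h) :
    pphid δ h = (3/4 - δ^2) * pphi δ h / h := by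
  have hβ : Real.arctan (1 / (2 * δ)) + δ * Real.log h = th δ h := rfl
  rw [hβ] at heq
  rw [Real.tan_eq_sin_div_cos] at heq
  have hsq : Real.sqrt h * Real.sqrt h = h := Real.mul_self_sqrt hh0.le
  have hne : Real.sqrt h ≠ 0 := (Real.sqrt_pos.2 hh0).ne'
  rw [pphid, pphi]
  field_simp at heq ⊢
  linear_combination (-2*h)*heq + (-(3-4*δ^2)*2*Real.cos (th δ h))*hsq
end hyps

section main
variable {h δ : ℝ} (hh0 : 0 < h) (hh1 : h < 1) (hδ : 0 < δ)
  (hang : Real.arctan (1 / (2 * δ)) + δ * Real.log h ∈ Set.Ioo (-(π/2)) (π/2))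
  (heq : 1/4 + δ * Real.tan (Real.arctan (1 / (2 * δ)) + δ * Real.log h) - δ ^ 2 = 0)

-- Splitting and basic integral computations shared by both bounds.
omit hh1 in
include hh0 in
lemma affine_den_int {u : ℝ → ℝ} (haff : ∀ x ∈ Set.Icc (0:ℝ) h, u x = (x / h) * u h) :
    ∫ x in (0:ℝ)..h, u x ^ 2 / x ^ 2 = (u h / h) ^ 2 * h := by
  have hcongr : ∀ᵐ x ∂volume, x ∈ Set.uIoc (0:ℝ) h → u x ^2 / x^2 = (u h / h)^2 := by
    apply Filter.Eventually.of_forall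
    intro x hx
    rw [Set.uIoc_of_le hh0.le] at hx
    have hxh : u x = (x/h) * u h := haff x ⟨hx.1.le, hx.2⟩
    have hx0 : x ≠ 0 := hx.1.ne'
    have hh0' : h ≠ 0 := hh0.ne'
    rw [hxh]
    field_simp
  rw [intervalIntegral.integral_congr_ae hcongr, intervalIntegral.integral_const]
  simp [smul_eq_mul]
  ring

include hh0 hh1 in
lemma num_lower_affine {u u' : ℝ → ℝ} (hm : MemUh h u u') :
    (u h)^2 / h ≤ ∫ x in (0:ℝ)..h, u' x ^ 2 := by
  obtain ⟨⟨hcont, huI, hu2, hrep⟩, hu0, haff⟩ := hm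
  set c : ℝ := u h / h with hc
  have hint : ∫ t in (0:ℝ)..h, u' t = u h := by
    have := hrep h ⟨hh0.le, hh1.le⟩
    rw [hu0] at this; linarith [this]
  have hu'I : IntervalIntegrable u' volume 0 h := by
    apply huI.mono_set
    rw [Set.uIcc_of_le hh0.le, Set.uIcc_of_le (le_of_lt (lt_of_lt_of_le hh0 hh1.le))]
    exact Set.Icc_subset_Icc le_rfl hh1.le
  have hu'2I : IntervalIntegrable (fun x => u' x ^ 2) volume 0 h := by
    rw [intervalIntegrable_iff_integrableOn_Ioc_of_le hh0.le]
    exact hu2.mono_set (fun x hx => ⟨hx.1, lt_of_le_of_lt hx.2 hh1⟩)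
  have hexp : ∀ x, (u' x - c)^2 = u' x ^2 - 2*c*u' x + c^2 := fun x => by ring
  have hnonneg : 0 ≤ ∫ x in (0:ℝ)..h, (u' x - c)^2 := by
    apply intervalIntegral.integral_nonneg hh0.le
    intro x _; positivity
  have hsplit : ∫ x in (0:ℝ)..h, (u' x - c)^2
      = (∫ x in (0:ℝ)..h, u' x ^2) - 2*c*(u h) + c^2 * h := by
    simp_rw [hexp]
    rw [intervalIntegral.integral_add (hu'2I.sub ((hu'I).const_mul (2*c)))
      intervalIntegrable_const,
      intervalIntegral.integral_sub hu'2I ((hu'I).const_mul (2*c)),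
      intervalIntegral.integral_const_mul, hint, intervalIntegral.integral_const]
    simp [smul_eq_mul]
    ring
  have hch : c * h = u h := by rw [hc]; exact div_mul_cancel₀ _ hh0.ne'
  have h0 : 0 ≤ (∫ x in (0:ℝ)..h, u' x ^2) - 2*c*(u h) + c^2 * h := by
    rw [← hsplit]; exact hnonneg
  have hc2 : c^2 * h = (u h)^2/h := by
    rw [hc]; field_simp
  have hcu : 2*c*(u h) = 2*c^2*h := by rw [← hch]; ring
  linarith [h0, hc2, hcu]

include hh0 hh1 hδ hang heq in
lemma num_lower_tail {u u' : ℝ → ℝ} (hm : MemUh h u u') :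
    -(3/4 - δ^2) * (u h)^2 / h + (1/4+δ^2) * ∫ x in h..1, u x ^2 / x^2
      ≤ ∫ x in h..1, u' x ^ 2 := by
  obtain ⟨⟨hcont, huI, hu2, hrep⟩, hu0, haff⟩ := hm
  have hh01 : (0:ℝ) ≤ h := hh0.le
  have hh1' : h ≤ 1 := hh1.le
  set g : ℝ → ℝ := fun y => pphid δ y / pphi δ y with hg
  set gd : ℝ → ℝ := fun y => -(1/4+δ^2)/y^2 - (g y)^2 with hgd
  have hφpos := pphi_pos hh0 hδ hang
  have hgderiv : ∀ x ∈ Set.Icc h 1, HasDerivAt g (gd x) x := fun x hx =>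
    hasDerivAt_g δ (lt_of_lt_of_le hh0 hx.1) (hφpos x hx).ne'
  have hgc : ContinuousOn g (Set.Icc h 1) := fun x hx =>
    (hgderiv x hx).continuousAt.continuousWithinAt
  have hgdc : ContinuousOn gd (Set.Icc h 1) := by
    apply ContinuousOn.sub
    · apply ContinuousOn.div continuousOn_const (continuousOn_pow 2)
      intro x hx
      exact pow_ne_zero _ (lt_of_lt_of_le hh0 hx.1).ne'
    · exact hgc.pow 2
  have hw : IntegrableOn u' (Set.Ioc h 1) := by
    have : IntervalIntegrable u' volume h 1 := by
      apply huI.mono_set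
      rw [Set.uIcc_of_le hh1', Set.uIcc_of_le (hh01.trans hh1')]
      exact Set.Icc_subset_Icc hh01 le_rfl
    rwa [intervalIntegrable_iff_integrableOn_Ioc_of_le hh1'] at this
  have hrep2 : ∀ x ∈ Set.Icc h 1, u x = u h + ∫ t in h..x, u' t := by
    intro x hx
    have e1 := hrep x ⟨hh01.trans hx.1, hx.2⟩
    have e2 := hrep h ⟨hh01, hh1'⟩
    have hadd : (∫ t in (0:ℝ)..h, u' t) + ∫ t in h..x, u' t = ∫ t in (0:ℝ)..x, u' t := by
      apply intervalIntegral.integral_add_adjacent_intervals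
      · apply huI.mono_set
        rw [Set.uIcc_of_le hh01, Set.uIcc_of_le (hh01.trans hh1')]
        exact Set.Icc_subset_Icc le_rfl hh1'
      · apply huI.mono_set
        rw [Set.uIcc_of_le hx.1, Set.uIcc_of_le (hh01.trans hh1')]
        exact Set.Icc_subset_Icc hh01 hx.2
    rw [e1, e2]
    linarith [hadd]
  have hT := ibp_quadratic hh1' hgderiv hgdc hw hrep2
  have hg1 : g 1 = 0 := by rw [hg]; simp [pphid_one hδ]
  have hgh : g h = (3/4 - δ^2)/h := by
    rw [hg]
    simp only
    rw [pphid_h hδ heq (cos_th_pos hh0 hδ hang h ⟨le_rfl, hh1'⟩) hh0]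
    field_simp [(hφpos h ⟨le_rfl, hh1'⟩).ne']
  rw [hg1, hgh] at hT
  -- pointwise inequality and integrability to compare
  have hucont : ContinuousOn u (Set.Icc h 1) := hcont.mono (Set.Icc_subset_Icc hh01 le_rfl)
  have hu'2I : IntervalIntegrable (fun x => u' x ^ 2) volume h 1 := by
    rw [intervalIntegrable_iff_integrableOn_Ioc_of_le hh1',
      integrableOn_Ioc_iff_integrableOn_Ioo]
    exact hu2.mono_set (fun x hx => ⟨lt_of_lt_of_le hh0 hx.1.le, hx.2⟩)
  have hwI : IntervalIntegrable u' volume h 1 := by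
    rw [intervalIntegrable_iff_integrableOn_Ioc_of_le hh1']; exact hw
  have hlhsI : IntervalIntegrable (fun x => 2 * g x * u x * u' x + gd x * u x ^ 2) volume h 1 := by
    apply IntervalIntegrable.add
    · have : IntervalIntegrable (fun x => (2 * g x * u x) * u' x) volume h 1 := by
        apply hwI.continuousOn_mul
        rw [Set.uIcc_of_le hh1']
        exact (continuousOn_const.mul hgc).mul hucont
      simpa [mul_assoc] using this
    · apply ContinuousOn.intervalIntegrable
      rw [Set.uIcc_of_le hh1']
      exact hgdc.mul (hucont.pow 2)
  have hden_cont : ContinuousOn (fun x => u x ^2 / x^2) (Set.Icc h 1) := by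
    apply ContinuousOn.div (hucont.pow 2) (continuousOn_pow 2)
    intro x hx
    exact pow_ne_zero _ (lt_of_lt_of_le hh0 hx.1).ne'
  have hdenI : IntervalIntegrable (fun x => u x ^2/x^2) volume h 1 := by
    apply ContinuousOn.intervalIntegrable
    rwa [Set.uIcc_of_le hh1']
  have hrhsI : IntervalIntegrable (fun x => u' x ^2 - (1/4+δ^2) * (u x ^2/x^2)) volume h 1 :=
    hu'2I.sub (hdenI.const_mul _)
  have hmono : ∫ x in h..1, (2 * g x * u x * u' x + gd x * u x ^ 2)
      ≤ ∫ x in h..1, (u' x ^2 - (1/4+δ^2) * (u x ^2/x^2)) := by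
    apply intervalIntegral.integral_mono_on hh1' hlhsI hrhsI
    intro x hx
    have hx0 : (0:ℝ) < x := lt_of_lt_of_le hh0 hx.1
    have hgd_eq : gd x = -(1/4+δ^2)/x^2 - (g x)^2 := rfl
    have key : u' x ^2 - (1/4+δ^2) * (u x^2/x^2) - (2 * g x * u x * u' x + gd x * u x ^ 2)
        = (u' x - g x * u x)^2 := by
      rw [hgd_eq]
      field_simp
      ring
    nlinarith [sq_nonneg (u' x - g x * u x), key]
  have hsub : ∫ x in h..1, (u' x ^2 - (1/4+δ^2) * (u x ^2/x^2))
      = (∫ x in h..1, u' x ^2) - (1/4+δ^2) * ∫ x in h..1, (u x ^2/x^2) := by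
    rw [intervalIntegral.integral_sub hu'2I (hdenI.const_mul _),
      intervalIntegral.integral_const_mul]
  rw [hsub, hT] at hmono
  have : 0 * u 1 ^2 - (3/4 - δ^2)/h * u h ^2 = -(3/4-δ^2) * (u h)^2/h := by ring
  linarith [hmono, this.symm.le]
end main

section main
variable {h δ : ℝ} (hh0 : 0 < h) (hh1 : h < 1) (hδ : 0 < δ)
  (hang : Real.arctan (1 / (2 * δ)) + δ * Real.log h ∈ Set.Ioo (-(π/2)) (π/2))
  (heq : 1/4 + δ * Real.tan (Real.arctan (1 / (2 * δ)) + δ * Real.log h) - δ ^ 2 = 0)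

include hh0 hh1 hδ hang heq in
lemma exists_minimizer : ∃ u u' : ℝ → ℝ, MemUh h u u' ∧ (∃ x ∈ Set.Icc (0:ℝ) 1, u x ≠ 0) ∧
    (∫ x in (0:ℝ)..1, u' x ^ 2) = (1/4+δ^2) * (∫ x in (0:ℝ)..1, u x ^2 / x^2) ∧
    0 < ∫ x in (0:ℝ)..1, u x ^2 / x^2 := by
  have hh1' : h ≤ 1 := hh1.le
  have hφpos := pphi_pos hh0 hδ hang
  have hφh : 0 < pphi δ h := hφpos h ⟨le_rfl, hh1'⟩
  set u₀ : ℝ → ℝ := fun x => if x ≤ h then (x/h) * pphi δ h else pphi δ x with hu₀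
  set w₀ : ℝ → ℝ := fun x => if x ≤ h then pphi δ h / h else pphid δ x with hw₀
  have hφcont : ∀ x : ℝ, 0 < x → ContinuousAt (pphi δ) x := fun x hx =>
    (hasDerivAt_pphi δ hx).continuousAt
  have hφdcont : ∀ x : ℝ, 0 < x → ContinuousAt (pphid δ) x := fun x hx =>
    (hasDerivAt_pphid δ hx).continuousAt
  have hφdcontOn : ∀ {a b : ℝ}, h ≤ a → ContinuousOn (pphid δ) (Set.Icc a b) := by
    intro a b ha
    exact fun x hx => ((hφdcont x (lt_of_lt_of_le hh0 (ha.trans hx.1))).continuousWithinAt)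
  -- continuity of u₀
  have hu₀cont : Continuous u₀ := by
    rw [hu₀]
    refine continuous_if_le (f := fun x : ℝ => x) (g := fun _ => h) continuous_id
      continuous_const (((continuous_id.div_const h).mul continuous_const).continuousOn)
      (fun x hx => (hφcont x (lt_of_lt_of_le hh0 hx)).continuousWithinAt) ?_
    intro x hx
    rw [hx, div_self hh0.ne', one_mul]
  -- u₀ values
  have hu₀0 : u₀ 0 = 0 := by simp [hu₀, hh0.le, hh0.ne']
  have hu₀h : u₀ h = pphi δ h := by simp [hu₀, div_self hh0.ne']
  have hu₀tail : ∀ x : ℝ, h < x → u₀ x = pphi δ x := by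
    intro x hx; simp [hu₀, not_le.mpr hx]
  -- integrability of w₀ on [0,h] and [h,1]
  have hw₀head : ∀ x ∈ Set.Ioc (0:ℝ) h, w₀ x = pphi δ h / h := by
    intro x hx; simp [hw₀, hx.2]
  have hw₀tail : ∀ {b : ℝ} (x : ℝ), x ∈ Set.Ioc h b → w₀ x = pphid δ x := by
    intro b x hx; simp [hw₀, not_le.mpr hx.1]
  have hw₀I1 : IntervalIntegrable w₀ volume 0 h := by
    rw [intervalIntegrable_iff_integrableOn_Ioc_of_le hh0.le,
      integrableOn_congr_fun hw₀head measurableSet_Ioc]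
    exact (integrableOn_const_iff).mpr (Or.inr measure_Ioc_lt_top)
  have hw₀I2 : ∀ {b : ℝ}, h ≤ b → IntervalIntegrable w₀ volume h b := by
    intro b hb
    rw [intervalIntegrable_iff_integrableOn_Ioc_of_le hb,
      integrableOn_congr_fun (fun x hx => hw₀tail x hx) measurableSet_Ioc]
    exact ((hφdcontOn le_rfl).integrableOn_Icc).mono_set Set.Ioc_subset_Icc_self
  have hw₀I : IntervalIntegrable w₀ volume 0 1 := hw₀I1.trans (hw₀I2 hh1')
  -- primitive identities
  have hrep_head : ∀ x : ℝ, 0 ≤ x → x ≤ h → ∫ t in (0:ℝ)..x, w₀ t = (x/h) * pphi δ h := by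
    intro x hx0 hxh
    have : ∀ᵐ t ∂volume, t ∈ Set.uIoc (0:ℝ) x → w₀ t = pphi δ h / h := by
      apply Filter.Eventually.of_forall
      intro t ht
      rw [Set.uIoc_of_le hx0] at ht
      exact hw₀head t ⟨ht.1, ht.2.trans hxh⟩
    rw [intervalIntegral.integral_congr_ae this, intervalIntegral.integral_const]
    simp [smul_eq_mul]
    ring
  have hrep_tail : ∀ x : ℝ, h ≤ x → x ≤ 1 → ∫ t in h..x, w₀ t = pphi δ x - pphi δ h := by
    intro x hxh hx1
    have hcg : ∀ᵐ t ∂volume, t ∈ Set.uIoc h x → w₀ t = pphid δ t := by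
      apply Filter.Eventually.of_forall
      intro t ht
      rw [Set.uIoc_of_le hxh] at ht
      exact hw₀tail t ht
    rw [intervalIntegral.integral_congr_ae hcg]
    apply intervalIntegral.integral_eq_sub_of_hasDerivAt
    · intro t ht
      rw [Set.uIcc_of_le hxh] at ht
      exact hasDerivAt_pphi δ (lt_of_lt_of_le hh0 ht.1)
    · apply ContinuousOn.intervalIntegrable
      rw [Set.uIcc_of_le hxh]
      exact hφdcontOn le_rfl
  -- membership
  have hmem : MemUh h u₀ w₀ := by
    refine ⟨⟨hu₀cont.continuousOn, hw₀I, ?_, ?_⟩, hu₀0, ?_⟩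
    · -- integrability of w₀²
      have i1 : IntegrableOn (fun t => w₀ t ^2) (Set.Ioc 0 h) := by
        rw [integrableOn_congr_fun (fun x hx => by rw [hw₀head x hx])
          measurableSet_Ioc]
        exact (integrableOn_const_iff).mpr (Or.inr measure_Ioc_lt_top)
      have i2 : IntegrableOn (fun t => w₀ t ^2) (Set.Ioc h 1) := by
        rw [integrableOn_congr_fun (fun x hx => by rw [hw₀tail x hx]) measurableSet_Ioc]
        exact (((hφdcontOn le_rfl).pow 2).integrableOn_Icc).mono_set Set.Ioc_subset_Icc_self
      apply (i1.union i2).mono_set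
      intro x hx
      rcases le_or_gt x h with hc | hc
      · exact Or.inl ⟨hx.1, hc⟩
      · exact Or.inr ⟨hc, hx.2.le⟩
    · intro x hx
      rw [hu₀0, zero_add]
      rcases le_or_gt x h with hc | hc
      · rw [hrep_head x hx.1 hc]
        simp [hu₀, hc]
      · rw [← intervalIntegral.integral_add_adjacent_intervals
          (a := (0:ℝ)) (b := h) (c := x) hw₀I1 (hw₀I2 hc.le),
          hrep_head h hh0.le le_rfl, div_self hh0.ne', one_mul,
          hrep_tail x hc.le hx.2, hu₀tail x hc]
        ring
    · intro x hx
      rcases le_or_gt x h with hc | hc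
      · rw [hu₀h]; simp [hu₀, hc]
      · exact absurd hx.2 (not_le.mpr hc)
  -- the integral identity
  have hNhead : ∫ x in (0:ℝ)..h, w₀ x ^2 = (pphi δ h / h)^2 * h := by
    have : ∀ᵐ t ∂volume, t ∈ Set.uIoc (0:ℝ) h → w₀ t ^2 = (pphi δ h / h)^2 := by
      apply Filter.Eventually.of_forall
      intro t ht
      rw [Set.uIoc_of_le hh0.le] at ht
      rw [hw₀head t ht]
    rw [intervalIntegral.integral_congr_ae this, intervalIntegral.integral_const]
    simp [smul_eq_mul]; ring
  have hDhead : ∫ x in (0:ℝ)..h, u₀ x ^2 / x^2 = (pphi δ h / h)^2 * h := by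
    have : ∀ᵐ t ∂volume, t ∈ Set.uIoc (0:ℝ) h → u₀ t ^2 / t^2 = (pphi δ h / h)^2 := by
      apply Filter.Eventually.of_forall
      intro t ht
      rw [Set.uIoc_of_le hh0.le] at ht
      have : u₀ t = (t/h) * pphi δ h := by simp [hu₀, ht.2]
      rw [this]
      have ht0 : t ≠ 0 := ht.1.ne'
      field_simp
    rw [intervalIntegral.integral_congr_ae this, intervalIntegral.integral_const]
    simp [smul_eq_mul]; ring
  -- tail integrals
  have hφcontOn : ContinuousOn (pphi δ) (Set.Icc h 1) := fun x hx =>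
    (hφcont x (lt_of_lt_of_le hh0 hx.1)).continuousWithinAt
  have htailcongr1 : ∫ x in h..1, w₀ x ^2 = ∫ x in h..1, pphid δ x ^2 := by
    apply intervalIntegral.integral_congr_ae
    apply Filter.Eventually.of_forall
    intro t ht
    rw [Set.uIoc_of_le hh1'] at ht
    rw [hw₀tail t ht]
  have htailcongr2 : ∫ x in h..1, u₀ x ^2/x^2 = ∫ x in h..1, pphi δ x ^2/x^2 := by
    apply intervalIntegral.integral_congr_ae
    apply Filter.Eventually.of_forall
    intro t ht
    rw [Set.uIoc_of_le hh1'] at ht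
    rw [hu₀tail t ht.1]
  have hφdI : IntervalIntegrable (fun x => pphid δ x ^2) volume h 1 := by
    apply ContinuousOn.intervalIntegrable
    rw [Set.uIcc_of_le hh1']
    exact (hφdcontOn le_rfl).pow 2
  have hφ2I : IntervalIntegrable (fun x => pphi δ x ^2 / x^2) volume h 1 := by
    apply ContinuousOn.intervalIntegrable
    rw [Set.uIcc_of_le hh1']
    apply ContinuousOn.div (hφcontOn.pow 2) (continuousOn_pow 2)
    intro x hx
    exact pow_ne_zero _ (lt_of_lt_of_le hh0 hx.1).ne'
  have hFTC : ∫ x in h..1, (pphid δ x ^2 - (1/4+δ^2) * (pphi δ x ^2/x^2))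
      = pphi δ 1 * pphid δ 1 - pphi δ h * pphid δ h := by
    apply intervalIntegral.integral_eq_sub_of_hasDerivAt (f := fun y => pphi δ y * pphid δ y)
    · intro x hx
      rw [Set.uIcc_of_le hh1'] at hx
      have hx0 : 0 < x := lt_of_lt_of_le hh0 hx.1
      have : HasDerivAt (fun y => pphi δ y * pphid δ y) _ x :=
        (hasDerivAt_pphi δ hx0).mul (hasDerivAt_pphid δ hx0)
      refine this.congr_deriv ?_
      have hx0' : x ≠ 0 := hx0.ne'
      ring
    · exact hφdI.sub (hφ2I.const_mul _)
  have hend : pphi δ 1 * pphid δ 1 - pphi δ h * pphid δ h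
      = -(3/4-δ^2) * (pphi δ h)^2 / h := by
    rw [pphid_one hδ, pphid_h hδ heq (cos_th_pos hh0 hδ hang h ⟨le_rfl, hh1'⟩) hh0]
    field_simp
    ring
  have htail : ∫ x in h..1, pphid δ x ^2
      = (1/4+δ^2) * (∫ x in h..1, pphi δ x ^2/x^2) - (3/4-δ^2) * (pphi δ h)^2 / h := by
    have hs := hFTC
    rw [intervalIntegral.integral_sub hφdI (hφ2I.const_mul _),
      intervalIntegral.integral_const_mul, hend] at hs
    linear_combination hs
  -- assemble
  have hw₀2I1 : IntervalIntegrable (fun x => w₀ x ^2) volume 0 h := by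
    rw [intervalIntegrable_iff_integrableOn_Ioc_of_le hh0.le,
      integrableOn_congr_fun (fun x hx => by rw [hw₀head x hx]) measurableSet_Ioc]
    exact (integrableOn_const_iff).mpr (Or.inr measure_Ioc_lt_top)
  have hw₀2I2 : IntervalIntegrable (fun x => w₀ x ^2) volume h 1 := by
    rw [intervalIntegrable_iff_integrableOn_Ioc_of_le hh1',
      integrableOn_congr_fun (fun x hx => by rw [hw₀tail x hx]) measurableSet_Ioc]
    exact (((hφdcontOn le_rfl).pow 2).integrableOn_Icc).mono_set Set.Ioc_subset_Icc_self
  have hu₀2I1 : IntervalIntegrable (fun x => u₀ x ^2/x^2) volume 0 h := by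
    rw [intervalIntegrable_iff_integrableOn_Ioc_of_le hh0.le]
    apply (integrableOn_congr_fun (g := fun _ => (pphi δ h / h)^2) ?_ measurableSet_Ioc).mpr
    · exact (integrableOn_const_iff).mpr (Or.inr measure_Ioc_lt_top)
    · intro t ht
      show u₀ t ^2 / t^2 = _
      have : u₀ t = (t/h) * pphi δ h := by simp [hu₀, ht.2]
      rw [this]
      have ht0 : t ≠ 0 := ht.1.ne'
      field_simp
  have hu₀2I2 : IntervalIntegrable (fun x => u₀ x ^2/x^2) volume h 1 := by
    rw [intervalIntegrable_iff_integrableOn_Ioc_of_le hh1']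
    apply (integrableOn_congr_fun (g := fun x => pphi δ x ^2/x^2) ?_ measurableSet_Ioc).mpr
    · rw [← intervalIntegrable_iff_integrableOn_Ioc_of_le hh1']
      exact hφ2I
    · intro t ht
      show u₀ t ^2 / t^2 = _
      rw [hu₀tail t ht.1]
  have hNsplit : ∫ x in (0:ℝ)..1, w₀ x ^2
      = (∫ x in (0:ℝ)..h, w₀ x ^2) + ∫ x in h..1, w₀ x ^2 :=
    (intervalIntegral.integral_add_adjacent_intervals hw₀2I1 hw₀2I2).symm
  have hDsplit : ∫ x in (0:ℝ)..1, u₀ x ^2/x^2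
      = (∫ x in (0:ℝ)..h, u₀ x ^2/x^2) + ∫ x in h..1, u₀ x ^2/x^2 :=
    (intervalIntegral.integral_add_adjacent_intervals hu₀2I1 hu₀2I2).symm
  refine ⟨u₀, w₀, hmem, ⟨h, ⟨hh0.le, hh1'⟩, by rw [hu₀h]; exact hφh.ne'⟩, ?_, ?_⟩
  · rw [hNsplit, hDsplit, hNhead, hDhead, htailcongr1, htailcongr2, htail]
    have hexp : (pphi δ h / h)^2 * h = (pphi δ h)^2/h := by
      field_simp
    rw [hexp]
    ring
  · rw [hDsplit, hDhead]
    have h1 : 0 < (pphi δ h / h)^2 * h := by positivity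
    have h2 : 0 ≤ ∫ x in h..1, u₀ x ^2/x^2 := by
      apply intervalIntegral.integral_nonneg hh1'
      intro x _; positivity
    linarith
end main

section main
variable {h δ : ℝ} (hh0 : 0 < h) (hh1 : h < 1) (hδ : 0 < δ)
  (hang : Real.arctan (1 / (2 * δ)) + δ * Real.log h ∈ Set.Ioo (-(π/2)) (π/2))
  (heq : 1/4 + δ * Real.tan (Real.arctan (1 / (2 * δ)) + δ * Real.log h) - δ ^ 2 = 0)

include hh0 hh1 in
lemma den_split {u u' : ℝ → ℝ} (hm : MemUh h u u') :
    IntervalIntegrable (fun x => u x ^2 / x^2) volume 0 h ∧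
    IntervalIntegrable (fun x => u x ^2 / x^2) volume h 1 ∧
    ∫ x in (0:ℝ)..1, u x ^2/x^2 = (u h / h)^2 * h + ∫ x in h..1, u x ^2/x^2 := by
  obtain ⟨⟨hcont, huI, hu2, hrep⟩, hu0, haff⟩ := hm
  have hh1' : h ≤ 1 := hh1.le
  have hI1 : IntervalIntegrable (fun x => u x ^2 / x^2) volume 0 h := by
    rw [intervalIntegrable_iff_integrableOn_Ioc_of_le hh0.le]
    apply (integrableOn_congr_fun (g := fun _ => (u h / h)^2) ?_ measurableSet_Ioc).mpr
    · exact (integrableOn_const_iff).mpr (Or.inr measure_Ioc_lt_top)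
    · intro t ht
      show u t ^2 / t^2 = _
      rw [haff t ⟨ht.1.le, ht.2⟩]
      have ht0 : t ≠ 0 := ht.1.ne'
      field_simp
  have hI2 : IntervalIntegrable (fun x => u x ^2 / x^2) volume h 1 := by
    apply ContinuousOn.intervalIntegrable
    rw [Set.uIcc_of_le hh1']
    apply ContinuousOn.div ((hcont.mono (Set.Icc_subset_Icc hh0.le le_rfl)).pow 2)
      (continuousOn_pow 2)
    intro x hx
    exact pow_ne_zero _ (lt_of_lt_of_le hh0 hx.1).ne'
  refine ⟨hI1, hI2, ?_⟩
  rw [← intervalIntegral.integral_add_adjacent_intervals hI1 hI2, affine_den_int hh0 haff]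

include hh0 hh1 in
lemma den_pos {u u' : ℝ → ℝ} (hm : MemUh h u u') (hnz : ∃ x ∈ Set.Icc (0:ℝ) 1, u x ≠ 0) :
    0 < ∫ x in (0:ℝ)..1, u x ^2/x^2 := by
  obtain ⟨hI1, hI2, hsplit⟩ := den_split hh0 hh1 hm
  obtain ⟨⟨hcont, huI, hu2, hrep⟩, hu0, haff⟩ := hm
  have hh1' : h ≤ 1 := hh1.le
  have htail_nonneg : 0 ≤ ∫ x in h..1, u x ^2/x^2 := by
    apply intervalIntegral.integral_nonneg hh1'
    intro x _; positivity
  rcases eq_or_ne (u h) 0 with huh | huh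
  · -- witness is in (h, 1]
    obtain ⟨x₀, hx₀, hx₀ne⟩ := hnz
    have hx₀h : h < x₀ := by
      by_contra hcon
      push_neg at hcon
      exact hx₀ne (by rw [haff x₀ ⟨hx₀.1, hcon⟩, huh, mul_zero])
    -- strict positivity of the tail integral
    set f : ℝ → ℝ := fun x => u x ^2/x^2 with hf
    have hx₀0 : 0 < x₀ := hh0.trans hx₀h
    have hfx₀ : 0 < f x₀ := by
      have : x₀ ≠ 0 := hx₀0.ne'
      rw [hf]
      positivity
    have hfc : ContinuousWithinAt f (Set.Icc h 1) x₀ := by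
      apply ContinuousWithinAt.div
        (((hcont.mono (Set.Icc_subset_Icc hh0.le le_rfl)) x₀ ⟨hx₀h.le, hx₀.2⟩).pow 2)
        ((continuousOn_pow 2) x₀ ⟨hx₀h.le, hx₀.2⟩)
      exact pow_ne_zero _ hx₀0.ne'
    have hev : {y | f x₀ / 2 < f y} ∈ nhdsWithin x₀ (Set.Icc h 1) :=
      hfc.eventually_const_lt (by linarith [hfx₀])
    rw [Metric.mem_nhdsWithin_iff] at hev
    obtain ⟨ε, hε, hball⟩ := hev
    set p : ℝ := max h (x₀ - ε/2) with hp
    have hpx₀ : p < x₀ := by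
      apply max_lt hx₀h; linarith
    have hsub : ∀ y ∈ Set.Ioc p x₀, f x₀/2 < f y := by
      intro y hy
      apply hball
      constructor
      · rw [Metric.mem_ball, Real.dist_eq, abs_lt]
        constructor
        · have h1 : x₀ - ε/2 ≤ p := le_max_right _ _
          have h2 := hy.1
          linarith
        · linarith [hy.2, hε]
      · exact ⟨(le_max_left _ _).trans hy.1.le, hy.2.trans hx₀.2⟩
    have hIOc : IntegrableOn f (Set.Ioc h 1) := by
      rwa [intervalIntegrable_iff_integrableOn_Ioc_of_le hh1'] at hI2
    have hmono : ∫ x in Set.Ioc p x₀, f x ≤ ∫ x in Set.Ioc h 1, f x := by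
      apply setIntegral_mono_set hIOc
      · exact Filter.Eventually.of_forall
          (fun x => div_nonneg (sq_nonneg _) (sq_nonneg _))
      · apply HasSubset.Subset.eventuallyLE
        intro y hy
        exact ⟨lt_of_le_of_lt (le_max_left _ _) hy.1, hy.2.trans hx₀.2⟩
    have hlow : (f x₀/2) * (x₀ - p) ≤ ∫ x in Set.Ioc p x₀, f x := by
      have hconst : ∫ _x in Set.Ioc p x₀, (f x₀/2) = (f x₀/2) * (x₀ - p) := by
        rw [setIntegral_const, Real.volume_real_Ioc_of_le hpx₀.le, smul_eq_mul]
        ring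
      rw [← hconst]
      have hfi : IntegrableOn f (Set.Ioc p x₀) := hIOc.mono_set
        (fun y hy => ⟨lt_of_le_of_lt (le_max_left _ _) hy.1, hy.2.trans hx₀.2⟩)
      apply setIntegral_mono_on ((integrableOn_const_iff).mpr (Or.inr measure_Ioc_lt_top)) hfi
        measurableSet_Ioc
      intro y hy
      exact (hsub y hy).le
    have htail_eq : ∫ x in h..1, u x ^2/x^2 = ∫ x in Set.Ioc h 1, f x :=
      intervalIntegral.integral_of_le hh1'
    rw [hsplit, huh]
    have hhead0 : ((0:ℝ)/h)^2 * h = 0 := by simp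
    rw [hhead0, zero_add, htail_eq]
    have hppos : 0 < (f x₀/2) * (x₀ - p) := by
      apply mul_pos (by linarith [hfx₀])
      linarith [hpx₀]
    linarith [hlow, hmono, hppos]
  · rw [hsplit]
    have : 0 < (u h/h)^2 * h := by
      have : u h / h ≠ 0 := div_ne_zero huh hh0.ne'
      positivity
    linarith
end main

section final
variable {h δ : ℝ} (hh0 : 0 < h) (hh1 : h < 1) (hδ : 0 < δ)
  (hang : Real.arctan (1 / (2 * δ)) + δ * Real.log h ∈ Set.Ioo (-(π/2)) (π/2))
  (heq : 1/4 + δ * Real.tan (Real.arctan (1 / (2 * δ)) + δ * Real.log h) - δ ^ 2 = 0)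

include hh0 hh1 hδ hang heq in
lemma num_ge {u u' : ℝ → ℝ} (hm : MemUh h u u') :
    (1/4+δ^2) * (∫ x in (0:ℝ)..1, u x ^2/x^2) ≤ ∫ x in (0:ℝ)..1, u' x ^2 := by
  obtain ⟨_, _, hdsplit⟩ := den_split hh0 hh1 hm
  obtain ⟨⟨hcont, huI, hu2, hrep⟩, hu0, haff⟩ := hm
  have hh1' : h ≤ 1 := hh1.le
  have hn1 : IntervalIntegrable (fun x => u' x ^2) volume 0 h := by
    rw [intervalIntegrable_iff_integrableOn_Ioc_of_le hh0.le]
    exact hu2.mono_set (fun x hx => ⟨hx.1, lt_of_le_of_lt hx.2 hh1⟩)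
  have hn2 : IntervalIntegrable (fun x => u' x ^2) volume h 1 := by
    rw [intervalIntegrable_iff_integrableOn_Ioc_of_le hh1',
      integrableOn_Ioc_iff_integrableOn_Ioo]
    exact hu2.mono_set (fun x hx => ⟨lt_of_lt_of_le hh0 hx.1.le, hx.2⟩)
  have hnsplit : ∫ x in (0:ℝ)..1, u' x ^2
      = (∫ x in (0:ℝ)..h, u' x ^2) + ∫ x in h..1, u' x ^2 :=
    (intervalIntegral.integral_add_adjacent_intervals hn1 hn2).symm
  have hA := num_lower_affine hh0 hh1 ⟨⟨hcont, huI, hu2, hrep⟩, hu0, haff⟩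
  have hB := num_lower_tail hh0 hh1 hδ hang heq ⟨⟨hcont, huI, hu2, hrep⟩, hu0, haff⟩
  have hhead : (u h / h)^2 * h = (u h)^2/h := by
    field_simp
  rw [hnsplit, hdsplit, hhead]
  set E := (u h)^2/h
  set C := ∫ x in h..1, u x ^2/x^2
  have hexp : -(3/4 - δ^2) * (u h)^2 / h = -(3/4-δ^2) * E := by
    rw [show E = (u h)^2/h from rfl]; ring
  rw [hexp] at hB
  nlinarith [hA, hB]

include hh0 hh1 hδ hang heq in
theorem mu_h_eq' : muh h = 1/4 + δ ^ 2 := by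
  obtain ⟨u₀, w₀, hmem₀, hnz₀, hEq₀, hD₀⟩ := exists_minimizer hh0 hh1 hδ hang heq
  have hmemS : (1/4 + δ^2 : ℝ) ∈ { s : ℝ | ∃ u u' : ℝ → ℝ, MemUh h u u' ∧
      (∃ x ∈ Set.Icc (0:ℝ) 1, u x ≠ 0) ∧
      s = (∫ x in (0:ℝ)..1, (u' x) ^ 2) / (∫ x in (0:ℝ)..1, (u x) ^ 2 / x ^ 2) } := by
    refine ⟨u₀, w₀, hmem₀, hnz₀, ?_⟩
    rw [hEq₀, mul_div_assoc, div_self hD₀.ne', mul_one]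
  have hlb : ∀ s ∈ { s : ℝ | ∃ u u' : ℝ → ℝ, MemUh h u u' ∧
      (∃ x ∈ Set.Icc (0:ℝ) 1, u x ≠ 0) ∧
      s = (∫ x in (0:ℝ)..1, (u' x) ^ 2) / (∫ x in (0:ℝ)..1, (u x) ^ 2 / x ^ 2) },
      (1/4 + δ^2 : ℝ) ≤ s := by
    rintro s ⟨u, u', hm, hnz, rfl⟩
    have hD := den_pos hh0 hh1 hm hnz
    have hN := num_ge hh0 hh1 hδ hang heq hm
    rw [le_div_iff₀ hD]
    exact hN
  rw [muh]
  exact le_antisymm (csInf_le ⟨1/4 + δ^2, hlb⟩ hmemS) (le_csInf ⟨_, hmemS⟩ hlb)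
end final

/-- If `δ_h > 0` solves `1/4 + δ_h·tan(arctan(1/(2δ_h)) + δ_h·log h) − δ_h² = 0`
(with the angle in `(−π/2, π/2)`), then `μ_h = 1/4 + δ_h²`. -/
theorem mu_h_eq (h δ : ℝ) (hh0 : 0 < h) (hh1 : h < 1) (hδ : 0 < δ)
    (hang : Real.arctan (1 / (2 * δ)) + δ * Real.log h ∈ Set.Ioo (-(π/2)) (π/2))
    (heq : 1/4 + δ * Real.tan (Real.arctan (1 / (2 * δ)) + δ * Real.log h) - δ ^ 2 = 0) :
    muh h = 1/4 + δ ^ 2 := by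
  exact mu_h_eq' hh0 hh1 hδ hang heq
end
end

section
/- Let 0 < h < 1 and let δ > 0 satisfy 1/4 + δ·tan(arctan(1/(2δ)) + δ·log h) − δ² = 0 with arctan(1/(2δ)) + δ·log h ∈ (−π/2, π/2). Then every u ∈ U_h satisfies ∫₀¹ u'(x)² dx ≥ (1/4 + δ²)·∫₀¹ x⁻² u(x)² dx. -/
open MeasureTheory Real Set Filter


lemma swap_tri (a b : ℝ) (hab : a ≤ b) (p q : ℝ → ℝ)
    (hp : IntegrableOn p (Ioc a b)) (hq : IntegrableOn q (Ioc a b)) :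
    ∫ x in Ioc a b, q x * ∫ t in Ioc a x, p t
      = ∫ t in Ioc a b, p t * ∫ x in Ioc t b, q x := by
  set μ := volume.restrict (Ioc a b) with hμ
  have hGint : Integrable (fun z : ℝ × ℝ => q z.1 * p z.2) (μ.prod μ) :=
    Integrable.mul_prod hq hp
  have hmeas : MeasurableSet {z : ℝ × ℝ | z.2 ≤ z.1} := measurableSet_le measurable_snd measurable_fst
  set F : ℝ × ℝ → ℝ := fun z => {z : ℝ × ℝ | z.2 ≤ z.1}.indicator (fun z => q z.1 * p z.2) z with hF
  have hFint : Integrable F (μ.prod μ) := by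
    refine hGint.norm.mono' (hGint.aestronglyMeasurable.indicator hmeas) ?_
    filter_upwards with z
    rw [hF]
    by_cases hz : z ∈ {z : ℝ × ℝ | z.2 ≤ z.1}
    · simp [Set.indicator_of_mem, hz]
    · simp only [Set.indicator_of_notMem hz]
      simp only [norm_zero, Real.norm_eq_abs, abs_mul]
      positivity
  have key := integral_integral_swap (f := fun x t => F (x, t)) (by exact hFint)
  have hL : ∀ x ∈ Ioc a b, (∫ t, F (x, t) ∂μ) = q x * ∫ t in Ioc a x, p t := by
    intro x hx
    have : ∀ t, F (x, t) = (Iic x).indicator (fun t => q x * p t) t := by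
      intro t
      by_cases ht : t ≤ x <;> simp [hF, Set.indicator_of_mem, Set.indicator_of_notMem, ht]
    simp_rw [this]
    rw [hμ, setIntegral_indicator measurableSet_Iic]
    have : Ioc a b ∩ Iic x = Ioc a x := by
      ext t; simp only [mem_inter_iff, mem_Ioc, mem_Iic]
      constructor
      · rintro ⟨⟨h1, h2⟩, h3⟩; exact ⟨h1, h3⟩
      · rintro ⟨h1, h3⟩; exact ⟨⟨h1, h3.trans hx.2⟩, h3⟩
    rw [this, integral_const_mul]
  have hR : ∀ t ∈ Ioc a b, (∫ x, F (x, t) ∂μ) = p t * ∫ x in Ioc t b, q x := by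
    intro t ht
    have : ∀ x, F (x, t) = (Ici t).indicator (fun x => q x * p t) x := by
      intro x
      by_cases hx : t ≤ x <;> simp [hF, Set.indicator_of_mem, Set.indicator_of_notMem, hx]
    simp_rw [this]
    rw [hμ, setIntegral_indicator measurableSet_Ici]
    have h2 : Ioc a b ∩ Ici t = Icc t b := by
      ext x; simp only [mem_inter_iff, mem_Ioc, mem_Icc, mem_Ici]
      constructor
      · rintro ⟨⟨h1, h2⟩, h3⟩; exact ⟨h3, h2⟩
      · rintro ⟨h1, h3⟩; exact ⟨⟨lt_of_lt_of_le ht.1 h1, h3⟩, h1⟩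
    rw [h2, integral_Icc_eq_integral_Ioc]
    simp_rw [mul_comm (q _) (p t)]
    rw [integral_const_mul]
  calc ∫ x in Ioc a b, q x * ∫ t in Ioc a x, p t
      = ∫ x, (∫ t, F (x, t) ∂μ) ∂μ := by
        rw [hμ]; exact (setIntegral_congr_fun measurableSet_Ioc (fun x hx => (hL x hx).symm))
    _ = ∫ t, (∫ x, F (x, t) ∂μ) ∂μ := key
    _ = ∫ t in Ioc a b, p t * ∫ x in Ioc t b, q x := by
        rw [hμ]; exact setIntegral_congr_fun measurableSet_Ioc (fun t ht => hR t ht)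

/-- Integration by parts for two functions given as integrals of integrable densities. -/
lemma ibp_ac (a b : ℝ) (hab : a ≤ b) (F G p q : ℝ → ℝ)
    (hp : IntervalIntegrable p volume a b) (hq : IntervalIntegrable q volume a b)
    (hF : ∀ x ∈ Icc a b, F x = F a + ∫ t in a..x, p t)
    (hG : ∀ x ∈ Icc a b, G x = G a + ∫ t in a..x, q t) :
    ∫ x in a..b, (F x * q x + p x * G x) = F b * G b - F a * G a := by
  set Ip : ℝ → ℝ := fun x => ∫ t in a..x, p t with hIp
  set Iq : ℝ → ℝ := fun x => ∫ t in a..x, q t with hIq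
  have hIpc : ContinuousOn Ip (uIcc a b) :=
    intervalIntegral.continuousOn_primitive_interval' hp left_mem_uIcc
  have hIqc : ContinuousOn Iq (uIcc a b) :=
    intervalIntegral.continuousOn_primitive_interval' hq left_mem_uIcc
  have int1 : IntervalIntegrable (fun x => F a * q x) volume a b := hq.const_mul _
  have int2 : IntervalIntegrable (fun x => p x * G a) volume a b := hp.mul_const _
  have int3 : IntervalIntegrable (fun x => q x * Ip x) volume a b := hq.mul_continuousOn hIpc
  have int4 : IntervalIntegrable (fun x => p x * Iq x) volume a b := hp.mul_continuousOn hIqc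
  have congr1 : ∫ x in a..b, (F x * q x + p x * G x)
      = ∫ x in a..b, (F a * q x + p x * G a + q x * Ip x + p x * Iq x) := by
    refine intervalIntegral.integral_congr (fun x hx => ?_)
    rw [uIcc_of_le hab] at hx
    rw [hF x hx, hG x hx]; ring
  have split : ∫ x in a..b, (F a * q x + p x * G a + q x * Ip x + p x * Iq x)
      = (∫ x in a..b, F a * q x) + (∫ x in a..b, p x * G a)
        + (∫ x in a..b, q x * Ip x) + ∫ x in a..b, p x * Iq x := by
    rw [intervalIntegral.integral_add (int1.add int2 |>.add int3) int4,
      intervalIntegral.integral_add (int1.add int2) int3,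
      intervalIntegral.integral_add int1 int2]
  -- the key swap computation
  have key : ∫ x in a..b, q x * Ip x = Iq b * Ip b - ∫ x in a..b, p x * Iq x := by
    have e1 : ∫ x in a..b, q x * Ip x = ∫ x in Ioc a b, q x * ∫ t in Ioc a x, p t := by
      rw [intervalIntegral.integral_of_le hab]
      refine setIntegral_congr_fun measurableSet_Ioc (fun x hx => ?_)
      rw [hIp]; simp only []
      rw [intervalIntegral.integral_of_le hx.1.le]
    have e2 : ∫ t in Ioc a b, p t * ∫ x in Ioc t b, q x
        = ∫ t in Ioc a b, (p t * Iq b - p t * Iq t) := by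
      refine setIntegral_congr_fun measurableSet_Ioc (fun t ht => ?_)
      have : ∫ x in Ioc t b, q x = Iq b - Iq t := by
        rw [← intervalIntegral.integral_of_le ht.2, hIq]
        simp only []
        rw [← intervalIntegral.integral_interval_sub_left (hq) (hq.mono_set ?_)]
        rw [uIcc_of_le ht.1.le, uIcc_of_le hab]
        exact Icc_subset_Icc le_rfl ht.2
      rw [this]; ring
    have e3 : ∫ t in Ioc a b, (p t * Iq b - p t * Iq t)
        = Iq b * Ip b - ∫ x in a..b, p x * Iq x := by
      rw [integral_sub (hp.1.mul_const _) int4.1, ← intervalIntegral.integral_of_le hab]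
      rw [← intervalIntegral.integral_of_le hab]
      rw [intervalIntegral.integral_mul_const]
      ring
    rw [e1, swap_tri a b hab p q hp.1 hq.1, e2, e3]
  rw [congr1, split, key, intervalIntegral.integral_const_mul, intervalIntegral.integral_mul_const]
  have hFb := hF b (right_mem_Icc.2 hab)
  have hGb := hG b (right_mem_Icc.2 hab)
  rw [hFb, hGb]
  show F a * Iq b + Ip b * G a + (Iq b * Ip b - ∫ x in a..b, p x * Iq x) + ∫ x in a..b, p x * Iq x
      = (F a + Ip b) * (G a + Iq b) - F a * G a
  ring


noncomputable section

set_option maxHeartbeats 2000000 in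
/-- If `δ > 0` solves `1/4 + δ·tan(arctan(1/(2δ)) + δ·log h) − δ² = 0` (with the angle
in `(−π/2, π/2)`), then every `u ∈ U_h` satisfies
`∫₀¹ u'² ≥ (1/4 + δ²)·∫₀¹ u²/x²`. -/
theorem Uh_hardy_lower_bound (h δ : ℝ) (hh0 : 0 < h) (hh1 : h < 1) (hδ : 0 < δ)
    (hang : Real.arctan (1 / (2 * δ)) + δ * Real.log h ∈ Set.Ioo (-(π/2)) (π/2))
    (heq : 1/4 + δ * Real.tan (Real.arctan (1 / (2 * δ)) + δ * Real.log h) - δ ^ 2 = 0) :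
    ∀ u u' : ℝ → ℝ, MemUh h u u' →
      (∫ x in (0:ℝ)..1, (u' x) ^ 2) ≥ (1/4 + δ ^ 2) * ∫ x in (0:ℝ)..1, (u x) ^ 2 / x ^ 2 := by
  intro u u' hu
  obtain ⟨⟨hucont, hu'int, hu'sq, hurepr⟩, hu0, haff⟩ := hu
  have hb1 : h ≤ 1 := hh1.le
  set A : ℝ := Real.arctan (1 / (2 * δ)) with hA
  set θ : ℝ → ℝ := fun x => A + δ * Real.log x with hθ
  set v : ℝ → ℝ := fun x => 1/2 - δ * Real.tan (θ x) with hv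
  set f : ℝ → ℝ := fun x => v x / x with hf
  set C : ℝ := 1/4 + δ^2 with hC
  set f' : ℝ → ℝ := fun x => -(f x)^2 - C/x^2 with hf'
  set U : Set ℝ := Ioi 0 ∩ θ ⁻¹' (Ioo (-(π/2)) (π/2)) with hU
  -- U is open
  have hθcont : ContinuousOn θ (Ioi 0) := by
    refine continuousOn_const.add (continuousOn_const.mul ?_)
    exact Real.continuousOn_log.mono (fun x hx => ne_of_gt hx)
  have hUopen : IsOpen U := hθcont.isOpen_inter_preimage isOpen_Ioi isOpen_Ioo
  -- Icc h 1 ⊆ U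
  have hsub : Icc h 1 ⊆ U := by
    intro x hx
    have hx0 : 0 < x := lt_of_lt_of_le hh0 hx.1
    have hlb : θ h ≤ θ x := by
      have : Real.log h ≤ Real.log x := Real.log_le_log hh0 hx.1
      simp only [hθ]
      nlinarith
    have hub : θ x ≤ A := by
      have : Real.log x ≤ 0 := Real.log_nonpos hx0.le hx.2
      simp only [hθ]
      nlinarith
    have hA1 : A < π/2 := Real.arctan_lt_pi_div_two _
    have hθh : θ h = A + δ * Real.log h := rfl
    have hanglt : -(π/2) < θ h := by rw [hθh]; exact hang.1
    exact ⟨hx0, lt_of_lt_of_le hanglt hlb, lt_of_le_of_lt hub hA1⟩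
  have hcos : ∀ x ∈ U, Real.cos (θ x) ≠ 0 := fun x hx =>
    (Real.cos_pos_of_mem_Ioo hx.2).ne'
  -- derivative of f
  have hderiv : ∀ x ∈ U, HasDerivAt f (f' x) x := by
    intro x hx
    obtain ⟨hx0, hxθ⟩ := hx
    have hx0' : (0:ℝ) < x := hx0
    have hcosx : Real.cos (θ x) ≠ 0 := hcos x ⟨hx0, hxθ⟩
    have hθd : HasDerivAt θ (δ * x⁻¹) x :=
      ((Real.hasDerivAt_log hx0'.ne').const_mul δ).const_add A
    have htan : HasDerivAt Real.tan (1 / Real.cos (θ x)^2) (θ x) :=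
      Real.hasDerivAt_tan hcosx
    have hcomp : HasDerivAt (fun y => Real.tan (θ y)) (1 / Real.cos (θ x)^2 * (δ * x⁻¹)) x :=
      htan.comp x hθd
    have hvd : HasDerivAt v (-(δ * (1 / Real.cos (θ x)^2 * (δ * x⁻¹)))) x :=
      (hcomp.const_mul δ).const_sub (1/2)
    have hfd : HasDerivAt f ((-(δ * (1 / Real.cos (θ x)^2 * (δ * x⁻¹))) * x - v x * 1) / x^2) x :=
      hvd.div (hasDerivAt_id x) hx0'.ne'
    convert hfd using 1
    have htansq : 1 / Real.cos (θ x)^2 = 1 + Real.tan (θ x)^2 := by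
      have := Real.inv_one_add_tan_sq hcosx
      field_simp at this ⊢
      linarith [this]
    rw [hf', hf, hv, htansq]
    simp only []
    field_simp
    ring
  -- continuity of f and f'
  have hfc : ContinuousOn f (Icc h 1) := fun x hx =>
    (hderiv x (hsub hx)).continuousAt.continuousWithinAt
  have hfcu : ContinuousOn f (uIcc h 1) := by rwa [uIcc_of_le hb1]
  have hf'c : ContinuousOn f' (Icc h 1) := by
    refine ((hfc.pow 2).neg).sub (continuousOn_const.div ?_ ?_)
    · exact (continuousOn_id.pow 2)
    · intro x hx
      exact pow_ne_zero 2 (ne_of_gt (lt_of_lt_of_le hh0 hx.1))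
  have hf'int : IntervalIntegrable f' volume h 1 := by
    apply ContinuousOn.intervalIntegrable; rwa [uIcc_of_le hb1]
  -- representation of f
  have hfrepr : ∀ x ∈ Icc h 1, f x = f h + ∫ t in h..x, f' t := by
    intro x hx
    have hsub2 : Icc h x ⊆ Icc h 1 := Icc_subset_Icc le_rfl hx.2
    have : ∫ t in h..x, f' t = f x - f h := by
      refine intervalIntegral.integral_eq_sub_of_hasDerivAt (fun t ht => ?_) ?_
      · rw [uIcc_of_le hx.1] at ht
        exact hderiv t (hsub (hsub2 ht))
      · refine hf'int.mono_set ?_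
        rw [uIcc_of_le hx.1, uIcc_of_le hb1]
        exact hsub2
    rw [this]; ring
  -- boundary values
  have hδ' : δ ≠ 0 := hδ.ne'
  have hf1 : f 1 = 0 := by
    simp only [hf, hv, hθ, Real.log_one, mul_zero, add_zero, hA, Real.tan_arctan]
    field_simp
    norm_num
  have hfh : f h = (1 - C) / h := by
    have h1 : δ * Real.tan (θ h) = δ^2 - 1/4 := by
      have : θ h = A + δ * Real.log h := rfl
      rw [this, hA]; linarith [heq]
    simp only [hf, hv]
    rw [h1, hC]; ring_nf
  -- u facts on [h,1]
  have hIccsub : Icc h 1 ⊆ Icc (0:ℝ) 1 := Icc_subset_Icc hh0.le le_rfl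
  have hu_int : IntervalIntegrable u' volume h 1 := by
    refine hu'int.mono_set ?_
    rw [uIcc_of_le hb1, uIcc_of_le (by norm_num : (0:ℝ) ≤ 1)]
    exact hIccsub
  have huconth : ContinuousOn u (Icc h 1) := hucont.mono hIccsub
  have hucontu : ContinuousOn u (uIcc h 1) := by rwa [uIcc_of_le hb1]
  have hurepr2 : ∀ x ∈ Icc h 1, u x = u h + ∫ t in h..x, u' t := by
    intro x hx
    have h1 : u x = u 0 + ∫ t in (0:ℝ)..x, u' t := hurepr x (hIccsub hx)
    have h2 : u h = u 0 + ∫ t in (0:ℝ)..h, u' t := hurepr h ⟨hh0.le, hb1⟩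
    have h3 : (∫ t in (0:ℝ)..x, u' t) - ∫ t in (0:ℝ)..h, u' t = ∫ t in h..x, u' t := by
      refine intervalIntegral.integral_interval_sub_left ?_ ?_
      · refine hu'int.mono_set ?_
        rw [uIcc_of_le (hh0.le.trans hx.1), uIcc_of_le (by norm_num : (0:ℝ) ≤ 1)]
        exact Icc_subset_Icc le_rfl ((hIccsub hx).2)
      · refine hu'int.mono_set ?_
        rw [uIcc_of_le hh0.le, uIcc_of_le (by norm_num : (0:ℝ) ≤ 1)]
        exact Icc_subset_Icc le_rfl hb1
    rw [h1, h2]; linarith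
  -- square representation
  set q2 : ℝ → ℝ := fun x => u x * u' x + u' x * u x with hq2
  have hq2int : IntervalIntegrable q2 volume h 1 :=
    (hu_int.continuousOn_mul hucontu).add (hu_int.mul_continuousOn hucontu)
  have hwrepr : ∀ y ∈ Icc h 1, u y ^ 2 = u h ^ 2 + ∫ t in h..y, q2 t := by
    intro y hy
    have key := ibp_ac h y hy.1 u u u' u'
      (hu_int.mono_set (by rw [uIcc_of_le hy.1, uIcc_of_le hb1]; exact Icc_subset_Icc le_rfl hy.2))
      (hu_int.mono_set (by rw [uIcc_of_le hy.1, uIcc_of_le hb1]; exact Icc_subset_Icc le_rfl hy.2))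
      (fun x hx => hurepr2 x (Icc_subset_Icc le_rfl hy.2 hx))
      (fun x hx => hurepr2 x (Icc_subset_Icc le_rfl hy.2 hx))
    have : ∫ t in h..y, q2 t = u y * u y - u h * u h := key
    rw [pow_two, pow_two, this]; ring
  -- main IBP
  have hmain : ∫ x in h..1, (f x * q2 x + f' x * (u x)^2) = -(f h) * (u h)^2 := by
    have := ibp_ac h 1 hb1 f (fun x => u x ^ 2) f' q2 hf'int hq2int hfrepr hwrepr
    rw [hf1] at this
    simpa using this
  -- integrability pieces on h..1
  have Iu'21 : IntervalIntegrable (fun x => u' x ^ 2) volume h 1 := by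
    rw [intervalIntegrable_iff_integrableOn_Ioc_of_le hb1]
    rw [integrableOn_Ioc_iff_integrableOn_Ioo]
    exact hu'sq.mono_set (Ioo_subset_Ioo hh0.le le_rfl)
  have Ifq2 : IntervalIntegrable (fun x => f x * q2 x) volume h 1 :=
    hq2int.continuousOn_mul hfcu
  have If'w : IntervalIntegrable (fun x => f' x * u x ^ 2) volume h 1 := by
    apply ContinuousOn.intervalIntegrable
    rw [uIcc_of_le hb1]
    exact hf'c.mul (huconth.pow 2)
  have Ifq2f'w : IntervalIntegrable (fun x => f x * q2 x + f' x * u x ^ 2) volume h 1 :=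
    Ifq2.add If'w
  have Ithird : IntervalIntegrable (fun x => (f' x + f x ^ 2) * u x ^ 2) volume h 1 := by
    apply ContinuousOn.intervalIntegrable
    rw [uIcc_of_le hb1]
    exact (hf'c.add (hfc.pow 2)).mul (huconth.pow 2)
  -- key inequality on [h,1]
  have hnn : (0:ℝ) ≤ ∫ x in h..1, (u' x - f x * u x)^2 :=
    intervalIntegral.integral_nonneg hb1 (fun x _ => sq_nonneg _)
  have hexp : ∫ x in h..1, (u' x - f x * u x)^2
      = (∫ x in h..1, u' x ^ 2) - (∫ x in h..1, (f x * q2 x + f' x * u x ^ 2))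
        + ∫ x in h..1, (f' x + f x ^ 2) * u x ^ 2 := by
    rw [← intervalIntegral.integral_sub Iu'21 Ifq2f'w,
        ← intervalIntegral.integral_add (Iu'21.sub Ifq2f'w) Ithird]
    refine intervalIntegral.integral_congr (fun x hx => ?_)
    simp only [hq2]
    ring
  have hthird : ∫ x in h..1, (f' x + f x ^ 2) * u x ^ 2
      = -C * ∫ x in h..1, u x ^ 2 / x ^ 2 := by
    rw [← intervalIntegral.integral_const_mul]
    refine intervalIntegral.integral_congr (fun x hx => ?_)
    rw [uIcc_of_le hb1] at hx
    have hx0 : x ≠ 0 := (lt_of_lt_of_le hh0 hx.1).ne'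
    rw [hf']
    field_simp
    ring
  have hstep1 : (∫ x in h..1, u' x ^ 2)
      ≥ -(f h) * u h ^ 2 + C * ∫ x in h..1, u x ^ 2 / x ^ 2 := by
    rw [hexp, hmain, hthird] at hnn
    linarith
  -- [0,h] part
  have hu_int0 : IntervalIntegrable u' volume 0 h := by
    refine hu'int.mono_set ?_
    rw [uIcc_of_le hh0.le, uIcc_of_le (by norm_num : (0:ℝ) ≤ 1)]
    exact Icc_subset_Icc le_rfl hb1
  have huh : u h = ∫ t in (0:ℝ)..h, u' t := by
    have := hurepr h ⟨hh0.le, hb1⟩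
    rw [hu0] at this
    simpa using this
  have Iu'20 : IntervalIntegrable (fun x => u' x ^ 2) volume 0 h := by
    rw [intervalIntegrable_iff_integrableOn_Ioc_of_le hh0.le]
    exact hu'sq.mono_set (fun x hx => ⟨hx.1, lt_of_le_of_lt hx.2 hh1⟩)
  set c : ℝ := u h / h with hc
  have h0nn : (0:ℝ) ≤ ∫ x in (0:ℝ)..h, (u' x - c)^2 :=
    intervalIntegral.integral_nonneg hh0.le (fun x _ => sq_nonneg _)
  have h0exp : ∫ x in (0:ℝ)..h, (u' x - c)^2
      = (∫ x in (0:ℝ)..h, u' x ^ 2) - 2*c*(u h) + c^2 * h := by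
    have e : ∫ x in (0:ℝ)..h, (u' x - c)^2
        = (∫ x in (0:ℝ)..h, u' x ^ 2) - (∫ x in (0:ℝ)..h, 2*c*u' x)
          + ∫ x in (0:ℝ)..h, c^2 := by
      rw [← intervalIntegral.integral_sub Iu'20 (hu_int0.const_mul _),
          ← intervalIntegral.integral_add (Iu'20.sub (hu_int0.const_mul _))
            intervalIntegrable_const]
      refine intervalIntegral.integral_congr (fun x hx => ?_)
      ring
    rw [e, intervalIntegral.integral_const_mul, intervalIntegral.integral_const, ← huh]
    simp
    ring
  have hstep0 : (∫ x in (0:ℝ)..h, u' x ^ 2) ≥ u h ^ 2 / h := by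
    have hch : 2*c*(u h) - c^2 * h = u h ^ 2 / h := by
      rw [hc]; field_simp; ring
    linarith [h0nn, h0exp.symm, hch]
  have hint0 : ∫ x in (0:ℝ)..h, u x ^ 2 / x ^ 2 = u h ^ 2 / h := by
    rw [intervalIntegral.integral_of_le hh0.le]
    have : ∀ x ∈ Ioc (0:ℝ) h, u x ^ 2 / x ^ 2 = u h ^ 2 / h ^ 2 := by
      intro x hx
      have hx0 : x ≠ 0 := hx.1.ne'
      rw [haff x ⟨hx.1.le, hx.2⟩]
      field_simp
    rw [setIntegral_congr_fun measurableSet_Ioc this]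
    simp [Real.volume_Ioc]
    rw [max_eq_left hh0.le]
    field_simp
  -- integrability of u²/x² on the two pieces
  have Iux0 : IntervalIntegrable (fun x => u x ^ 2 / x ^ 2) volume 0 h := by
    rw [intervalIntegrable_iff_integrableOn_Ioc_of_le hh0.le]
    have : IntegrableOn (fun _ : ℝ => u h ^ 2 / h ^ 2) (Ioc 0 h) :=
      integrableOn_const measure_Ioc_lt_top.ne
    refine this.congr_fun ?_ measurableSet_Ioc
    intro x hx
    have hx0 : x ≠ 0 := hx.1.ne'
    show u h ^ 2 / h ^ 2 = u x ^ 2 / x ^ 2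
    rw [haff x ⟨hx.1.le, hx.2⟩]
    field_simp
  have Iux1 : IntervalIntegrable (fun x => u x ^ 2 / x ^ 2) volume h 1 := by
    apply ContinuousOn.intervalIntegrable
    rw [uIcc_of_le hb1]
    refine (huconth.pow 2).div (continuousOn_id.pow 2) ?_
    intro x hx
    exact pow_ne_zero 2 (ne_of_gt (lt_of_lt_of_le hh0 hx.1))
  -- splits
  have Su' : ∫ x in (0:ℝ)..1, u' x ^ 2
      = (∫ x in (0:ℝ)..h, u' x ^ 2) + ∫ x in h..1, u' x ^ 2 :=
    (intervalIntegral.integral_add_adjacent_intervals Iu'20 Iu'21).symm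
  have Su : ∫ x in (0:ℝ)..1, u x ^ 2 / x ^ 2
      = (∫ x in (0:ℝ)..h, u x ^ 2 / x ^ 2) + ∫ x in h..1, u x ^ 2 / x ^ 2 :=
    (intervalIntegral.integral_add_adjacent_intervals Iux0 Iux1).symm
  -- final arithmetic
  have hfheq : f h * u h ^ 2 = u h ^ 2 / h - C * (u h ^ 2 / h) := by
    rw [hfh]; field_simp
  rw [ge_iff_le, Su, Su', hint0]
  nlinarith [hstep0, hstep1, hfheq]
end
end

section
/- Let h₀ ∈ (0,1) and let δ : (0,h₀) → (0,∞) be such that for every h ∈ (0,h₀) one has 1/4 + δ(h)·tan(arctan(1/(2δ(h))) + δ(h)·log h) − δ(h)² = 0 with arctan(1/(2δ(h))) + δ(h)·log h ∈ (−π/2, π/2), and suppose δ(h) → 0 as h → 0⁺. Then δ(h)·(6 + |log h|) → π as h → 0⁺; that is, δ(h) = π/(6 + |log h|) + o(1/|log h|). -/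
open MeasureTheory Real Set Filter

noncomputable section

/-- Asymptotics of the solution `δ(h)` of
`1/4 + δ·tan(arctan(1/(2δ)) + δ·log h) − δ² = 0`: as `h → 0⁺` (within `(0,h₀)`),
`δ(h)·(6 + |log h|) → π`, i.e. `δ(h) = π/(6 + |log h|) + o(1/|log h|)`. -/
theorem delta_h_asymptotics (h₀ : ℝ) (hh₀ : h₀ ∈ Set.Ioo (0:ℝ) 1) (δ : ℝ → ℝ)
    (hpos : ∀ h ∈ Set.Ioo (0:ℝ) h₀, 0 < δ h)
    (hang : ∀ h ∈ Set.Ioo (0:ℝ) h₀,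
      Real.arctan (1 / (2 * δ h)) + δ h * Real.log h ∈ Set.Ioo (-(π/2)) (π/2))
    (heq : ∀ h ∈ Set.Ioo (0:ℝ) h₀,
      1/4 + δ h * Real.tan (Real.arctan (1 / (2 * δ h)) + δ h * Real.log h) - (δ h) ^ 2 = 0)
    (hlim : Filter.Tendsto δ (nhdsWithin 0 (Set.Ioo 0 h₀)) (nhds 0)) :
    Filter.Tendsto (fun h => δ h * (6 + |Real.log h|))
      (nhdsWithin 0 (Set.Ioo 0 h₀)) (nhds π) := by
  have hδpos : Tendsto δ (nhdsWithin 0 (Set.Ioo 0 h₀)) (nhdsWithin 0 (Set.Ioi 0)) := by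
    apply tendsto_nhdsWithin_of_tendsto_nhds_of_eventually_within _ hlim
    filter_upwards [self_mem_nhdsWithin] with h hh using hpos h hh
  -- key identity: δ h * log h = arctan((δ² - 1/4)/δ) - arctan(1/(2δ))
  have hkey : ∀ h ∈ Set.Ioo (0:ℝ) h₀, δ h * Real.log h
      = Real.arctan ((δ h ^ 2 - 1/4) / δ h) - Real.arctan (1 / (2 * δ h)) := by
    intro h hh
    have hδ := hpos h hh
    have hθ := hang h hh
    have he := heq h hh
    have hne : δ h ≠ 0 := ne_of_gt hδ
    have htan : Real.tan (Real.arctan (1/(2*δ h)) + δ h * Real.log h)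
        = (δ h ^ 2 - 1/4) / δ h := by
      field_simp
      nlinarith [he]
    have harc := Real.arctan_tan (x := Real.arctan (1/(2*δ h)) + δ h * Real.log h) hθ.1 hθ.2
    rw [htan] at harc
    linarith [harc]
  -- limit of (x² - 1/4)/x as x → 0⁺ is -∞
  have h1 : Tendsto (fun x : ℝ => (x^2 - 1/4)/x) (nhdsWithin 0 (Set.Ioi 0)) atBot := by
    have heqf : (fun x : ℝ => (x^2 - 1/4)/x)
        =ᶠ[nhdsWithin (0:ℝ) (Set.Ioi 0)] fun x => x - (1/4) * x⁻¹ := by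
      filter_upwards [self_mem_nhdsWithin] with x hx
      have : x ≠ 0 := ne_of_gt hx
      field_simp
    refine Tendsto.congr' heqf.symm ?_
    have h2 : Tendsto (fun x : ℝ => (1/4) * x⁻¹) (nhdsWithin 0 (Set.Ioi 0)) atTop :=
      tendsto_inv_nhdsGT_zero.const_mul_atTop (by norm_num)
    have h2' : Tendsto (fun x : ℝ => -((1/4) * x⁻¹)) (nhdsWithin 0 (Set.Ioi 0)) atBot :=
      tendsto_neg_atBot_iff.mpr h2
    have hle : ∀ᶠ x : ℝ in nhdsWithin 0 (Set.Ioi 0), x ≤ 1 := by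
      filter_upwards [nhdsWithin_le_nhds (eventually_lt_nhds (by norm_num : (0:ℝ) < 1))]
        with x hx using hx.le
    have := tendsto_atBot_add_left_of_ge' (l := nhdsWithin (0:ℝ) (Set.Ioi 0)) 1 hle h2'
    simpa [sub_eq_add_neg] using this
  have harc1 : Tendsto (fun x : ℝ => Real.arctan ((x^2 - 1/4)/x))
      (nhdsWithin 0 (Set.Ioi 0)) (nhds (-(π/2))) :=
    (Real.tendsto_arctan_atBot.mono_right nhdsWithin_le_nhds).comp h1
  have h4 : Tendsto (fun x : ℝ => 1 / (2 * x)) (nhdsWithin 0 (Set.Ioi 0)) atTop := by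
    have : (fun x : ℝ => 1 / (2 * x)) = fun x => (1/2) * x⁻¹ := by
      funext x; field_simp
    rw [this]
    exact tendsto_inv_nhdsGT_zero.const_mul_atTop (by norm_num)
  have harc2 : Tendsto (fun x : ℝ => Real.arctan (1 / (2 * x)))
      (nhdsWithin 0 (Set.Ioi 0)) (nhds (π/2)) :=
    (Real.tendsto_arctan_atTop.mono_right nhdsWithin_le_nhds).comp h4
  -- δ h * log h → -π
  have hloglim : Tendsto (fun h => δ h * Real.log h)
      (nhdsWithin 0 (Set.Ioo 0 h₀)) (nhds (-π)) := by
    have := (harc1.comp hδpos).sub (harc2.comp hδpos)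
    have hπ : -(π/2) - π/2 = -π := by ring
    rw [hπ] at this
    refine Tendsto.congr' ?_ this
    filter_upwards [self_mem_nhdsWithin] with h hh
    exact (hkey h hh).symm
  -- conclude
  have hfin : Tendsto (fun h => 6 * δ h - δ h * Real.log h)
      (nhdsWithin 0 (Set.Ioo 0 h₀)) (nhds π) := by
    have := (hlim.const_mul 6).sub hloglim
    simpa using this
  refine Tendsto.congr' ?_ hfin
  filter_upwards [self_mem_nhdsWithin] with h hh
  have hlt1 : h < 1 := lt_trans hh.2 hh₀.2
  have hlog : Real.log h < 0 := Real.log_neg hh.1 hlt1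
  rw [abs_of_neg hlog]
  ring
end
end

section
/- For every ε ∈ (0,1), the function v_ε satisfies: (i) ∫₀¹ x⁻² v_ε(x)² dx = |log ε|/2; (ii) ∫₀¹ v_ε'(x)² dx = (|log ε|/2)·(1/4 + π²/(log ε)²), where v_ε' is the derivative of v_ε (equal to 0 on (0,ε)); (iii) ∫_ε¹ v_ε''(x)²·x² dx = |log ε|/32 + π²/(4|log ε|) + π⁴/(2|log ε|³), where v_ε'' is the second derivative of v_ε on (ε,1). -/
open MeasureTheory Real Set Filter

noncomputable section


def Gf (L : ℝ) : ℝ → ℝ := fun x =>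
  Real.sin (π * Real.log x / L) / (2 * Real.sqrt x)
    + Real.sqrt x * Real.cos (π * Real.log x / L) * (π / L) / x

def Hf (L : ℝ) : ℝ → ℝ := fun x =>
  -((1/4 + (π / L) ^ 2) * Real.sin (π * Real.log x / L) / (x * Real.sqrt x))

lemma hasDerivAt_F {L x : ℝ} (hL : L ≠ 0) (hx : 0 < x) :
    HasDerivAt (fun y => Real.sqrt y * Real.sin (π * Real.log y / L)) (Gf L x) x := by
  have hs : Real.sqrt x ≠ 0 := by positivity
  have hlog : HasDerivAt (fun y : ℝ => π * Real.log y / L) (π * x⁻¹ / L) x :=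
    ((Real.hasDerivAt_log hx.ne').const_mul π).div_const L
  have hsin : HasDerivAt (fun y : ℝ => Real.sin (π * Real.log y / L))
      (Real.cos (π * Real.log x / L) * (π * x⁻¹ / L)) x :=
    (Real.hasDerivAt_sin _).comp x hlog
  have := (Real.hasDerivAt_sqrt hx.ne').mul hsin
  refine this.congr_deriv ?_
  symm
  unfold Gf
  field_simp

lemma hasDerivAt_G {L x : ℝ} (hL : L ≠ 0) (hx : 0 < x) :
    HasDerivAt (Gf L) (Hf L x) x := by
  have hs : Real.sqrt x ≠ 0 := by positivity
  have hsq : Real.sqrt x ^ 2 = x := Real.sq_sqrt hx.le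
  have hlog : HasDerivAt (fun y : ℝ => π * Real.log y / L) (π * x⁻¹ / L) x :=
    ((Real.hasDerivAt_log hx.ne').const_mul π).div_const L
  have hsin : HasDerivAt (fun y : ℝ => Real.sin (π * Real.log y / L))
      (Real.cos (π * Real.log x / L) * (π * x⁻¹ / L)) x :=
    (Real.hasDerivAt_sin _).comp x hlog
  have hcos : HasDerivAt (fun y : ℝ => Real.cos (π * Real.log y / L))
      (-Real.sin (π * Real.log x / L) * (π * x⁻¹ / L)) x :=
    (Real.hasDerivAt_cos _).comp x hlog
  have hsqrt := Real.hasDerivAt_sqrt hx.ne'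
  have h2s : (2 : ℝ) * Real.sqrt x ≠ 0 := by positivity
  have h1 : HasDerivAt (fun y : ℝ => Real.sin (π * Real.log y / L) / (2 * Real.sqrt y))
      ((Real.cos (π * Real.log x / L) * (π * x⁻¹ / L) * (2 * Real.sqrt x)
        - Real.sin (π * Real.log x / L) * (2 * (1 / (2 * Real.sqrt x)))) / (2 * Real.sqrt x) ^ 2) x :=
    hsin.div (hsqrt.const_mul 2) h2s
  have h2 : HasDerivAt (fun y : ℝ => Real.sqrt y * Real.cos (π * Real.log y / L) * (π / L) / y)
      (((1 / (2 * Real.sqrt x) * Real.cos (π * Real.log x / L)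
          + Real.sqrt x * (-Real.sin (π * Real.log x / L) * (π * x⁻¹ / L))) * (π / L) * x
        - Real.sqrt x * Real.cos (π * Real.log x / L) * (π / L) * 1) / x ^ 2) x :=
    ((hsqrt.mul hcos).mul_const (π / L)).div (hasDerivAt_id x) hx.ne'
  have := h1.add h2
  refine this.congr_deriv ?_
  symm
  unfold Hf
  have h4 : Real.sqrt x ^ 4 = x ^ 2 := by rw [show (4:ℕ) = 2*2 from rfl, pow_mul, hsq]
  have h6 : Real.sqrt x ^ 6 = x ^ 3 := by rw [show (6:ℕ) = 2*3 from rfl, pow_mul, hsq]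
  field_simp
  ring_nf
  simp only [h4, h6, hsq]
  ring

lemma sub_int {ε : ℝ} (hε : 0 < ε) (F : ℝ → ℝ) (hF : Continuous F) :
    ∫ x in ε..1, x⁻¹ * F (Real.log x) = ∫ t in Real.log ε..0, F t := by
  have h0 : ∀ x ∈ uIcc ε 1, (0:ℝ) < x := by
    intro x hx
    have := hx.1
    rcases le_total ε 1 with h | h
    · rw [uIcc_of_le h] at hx; exact lt_of_lt_of_le hε hx.1
    · rw [uIcc_of_ge h] at hx; exact lt_of_lt_of_le one_pos hx.1
  have := intervalIntegral.integral_comp_smul_deriv (f := Real.log) (f' := fun x => x⁻¹)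
    (g := F) (a := ε) (b := 1)
    (fun x hx => Real.hasDerivAt_log (h0 x hx).ne')
    (continuousOn_inv₀.mono (fun x hx => (h0 x hx).ne')) hF
  simpa [Real.log_one] using this

lemma sinsq_int {L : ℝ} (hL : L ≠ 0) :
    ∫ t in L..0, Real.sin (π * t / L) ^ 2 = -L / 2 := by
  have hc : π / L ≠ 0 := div_ne_zero Real.pi_ne_zero hL
  have : ∀ t : ℝ, π * t / L = (π / L) * t := by intro t; ring
  simp only [this]
  rw [intervalIntegral.integral_comp_mul_left (fun u => Real.sin u ^ 2) hc]
  rw [mul_zero, show π / L * L = π by field_simp, integral_sin_sq]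
  simp [Real.sin_pi]
  field_simp

lemma mix_int {L : ℝ} (hL : L ≠ 0) :
    ∫ t in L..0, (Real.sin (π * t / L) / 2 + (π / L) * Real.cos (π * t / L)) ^ 2
      = (-L / 2) * (1/4 + (π / L) ^ 2) := by
  have hc : π / L ≠ 0 := div_ne_zero Real.pi_ne_zero hL
  have h1 : ∀ t : ℝ, π * t / L = (π / L) * t := by intro t; ring
  simp only [h1]
  rw [intervalIntegral.integral_comp_mul_left
    (fun u => (Real.sin u / 2 + (π / L) * Real.cos u) ^ 2) hc]
  rw [mul_zero, show π / L * L = π by field_simp]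
  have e1 : ∀ u : ℝ, (Real.sin u / 2 + (π / L) * Real.cos u) ^ 2
      = (1/4) * Real.sin u ^ 2 + (π / L) * (Real.sin u * Real.cos u)
        + (π / L) ^ 2 * Real.cos u ^ 2 := by intro u; ring
  simp only [e1]
  rw [intervalIntegral.integral_add (by apply Continuous.intervalIntegrable; continuity)
      (by apply Continuous.intervalIntegrable; continuity),
    intervalIntegral.integral_add (by apply Continuous.intervalIntegrable; continuity)
      (by apply Continuous.intervalIntegrable; continuity),
    intervalIntegral.integral_const_mul, intervalIntegral.integral_const_mul,
    intervalIntegral.integral_const_mul, integral_sin_sq, integral_sin_mul_cos₁,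
    integral_cos_sq]
  simp [Real.sin_pi, Real.cos_pi]
  field_simp
  ring

/-- The test function `v_ε`: zero on `[0,ε]` and `√x·sin(π·log x / log ε)` on `(ε,1]`. -/
def veps (ε : ℝ) : ℝ → ℝ := fun x =>
  if x ≤ ε then 0 else Real.sqrt x * Real.sin (π * Real.log x / Real.log ε)

/-- Exact values of the weighted norms of `v_ε`:
`∫₀¹ v_ε²/x² = |log ε|/2`,
`∫₀¹ v_ε'² = (|log ε|/2)(1/4 + π²/(log ε)²)`, and
`∫_ε¹ v_ε''²·x² = |log ε|/32 + π²/(4|log ε|) + π⁴/(2|log ε|³)`. -/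
theorem veps_norms (ε : ℝ) (hε : ε ∈ Set.Ioo (0:ℝ) 1) :
    (∫ x in (0:ℝ)..1, (veps ε x) ^ 2 / x ^ 2) = |Real.log ε| / 2 ∧
    (∫ x in (0:ℝ)..1, (deriv (veps ε) x) ^ 2)
      = (|Real.log ε| / 2) * (1/4 + π ^ 2 / (Real.log ε) ^ 2) ∧
    (∫ x in ε..1, (deriv (deriv (veps ε)) x) ^ 2 * x ^ 2)
      = |Real.log ε| / 32 + π ^ 2 / (4 * |Real.log ε|) + π ^ 4 / (2 * |Real.log ε| ^ 3) := by
  obtain ⟨hε0, hε1⟩ := hε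
  set L := Real.log ε with hLdef
  have hLneg : L < 0 := Real.log_neg hε0 hε1
  have hL : L ≠ 0 := hLneg.ne
  have habs : |L| = -L := abs_of_neg hLneg
  have hv0 : ∀ x ≤ ε, veps ε x = 0 := fun x hx => if_pos hx
  have hveq : ∀ y, ε < y → veps ε y = Real.sqrt y * Real.sin (π * Real.log y / L) := by
    intro y hy; simp [veps, not_le.mpr hy, ← hLdef]
  have hd0 : ∀ x, x < ε → deriv (veps ε) x = 0 := by
    intro x hx
    have heq : veps ε =ᶠ[nhds x] (fun _ => 0) :=
      Filter.eventuallyEq_of_mem (Iio_mem_nhds hx) (fun y hy => hv0 y (le_of_lt hy))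
    rw [Filter.EventuallyEq.deriv_eq heq, deriv_const]
  have hdG : ∀ x, ε < x → deriv (veps ε) x = Gf L x := by
    intro x hx
    have hx0 : 0 < x := hε0.trans hx
    have heq : veps ε =ᶠ[nhds x] fun y => Real.sqrt y * Real.sin (π * Real.log y / L) :=
      Filter.eventuallyEq_of_mem (Ioi_mem_nhds hx) (fun y hy => hveq y hy)
    exact ((hasDerivAt_F hL hx0).congr_of_eventuallyEq heq).deriv
  have hdH : ∀ x, ε < x → deriv (deriv (veps ε)) x = Hf L x := by
    intro x hx
    have hx0 : 0 < x := hε0.trans hx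
    have heq : deriv (veps ε) =ᶠ[nhds x] Gf L :=
      Filter.eventuallyEq_of_mem (Ioi_mem_nhds hx) (fun y hy => hdG y hy)
    exact ((hasDerivAt_G hL hx0).congr_of_eventuallyEq heq).deriv
  have huIcc : uIcc ε 1 = Icc ε 1 := uIcc_of_le hε1.le
  have hpos : ∀ x ∈ Icc ε 1, (0:ℝ) < x := fun x hx => lt_of_lt_of_le hε0 hx.1
  have hae : ∀ᵐ x : ℝ, x ≠ ε := by
    refine compl_mem_ae_iff.mpr ?_
    show volume {x : ℝ | x = ε} = 0
    rw [show {x : ℝ | x = ε} = {ε} from by ext y; simp]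
    exact Real.volume_singleton
  -- the three explicit integrands
  set φ₁ : ℝ → ℝ := fun x => x⁻¹ * Real.sin (π * Real.log x / L) ^ 2 with hφ₁
  set φ₂ : ℝ → ℝ := fun x =>
    x⁻¹ * (Real.sin (π * Real.log x / L) / 2 + (π / L) * Real.cos (π * Real.log x / L)) ^ 2
    with hφ₂
  have hφ₁cont : ContinuousOn φ₁ (uIcc ε 1) := by
    rw [huIcc]
    intro x hx
    have hx0 := hpos x hx
    exact ((continuousAt_inv₀ hx0.ne').mul
      ((Real.continuous_sin.continuousAt.comp
        (((Real.continuousAt_log hx0.ne').const_mul π).div_const L)).pow 2)).continuousWithinAt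
  have hφ₂cont : ContinuousOn φ₂ (uIcc ε 1) := by
    rw [huIcc]
    intro x hx
    have hx0 := hpos x hx
    have hlog : ContinuousAt (fun y : ℝ => π * Real.log y / L) x :=
      ((Real.continuousAt_log hx0.ne').const_mul π).div_const L
    have h1 : ContinuousAt (fun y : ℝ =>
        Real.sin (π * Real.log y / L) / 2 + (π / L) * Real.cos (π * Real.log y / L)) x :=
      ((Real.continuous_sin.continuousAt.comp hlog).div_const 2).add
        ((Real.continuous_cos.continuousAt.comp hlog).const_mul (π / L))
    exact ((continuousAt_inv₀ hx0.ne').mul (h1.pow 2)).continuousWithinAt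
  -- identity for Gf squared
  have hGsq : ∀ x, 0 < x → (Gf L x) ^ 2 = φ₂ x := by
    intro x hx0
    have hs : Real.sqrt x ≠ 0 := by positivity
    have hsq : Real.sqrt x ^ 2 = x := Real.sq_sqrt hx0.le
    have h4 : Real.sqrt x ^ 4 = x ^ 2 := by rw [show (4:ℕ) = 2*2 from rfl, pow_mul, hsq]
    simp only [Gf, hφ₂]
    field_simp
    ring_nf
    simp only [h4, hsq]
    ring
  -- identity for Hf squared times x^2
  have hHsq : ∀ x, 0 < x → (Hf L x) ^ 2 * x ^ 2 = (1/4 + (π/L)^2)^2 * φ₁ x := by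
    intro x hx0
    have hs : Real.sqrt x ≠ 0 := by positivity
    have hsq : Real.sqrt x ^ 2 = x := Real.sq_sqrt hx0.le
    simp only [Hf, hφ₁]
    field_simp
    ring_nf
    simp only [hsq]
  have hlin : Continuous fun t : ℝ => π * t / L := by fun_prop
  have hF1 : Continuous fun t : ℝ => Real.sin (π * t / L) ^ 2 :=
    (Real.continuous_sin.comp hlin).pow 2
  have hF2 : Continuous fun t : ℝ =>
      (Real.sin (π * t / L) / 2 + (π / L) * Real.cos (π * t / L)) ^ 2 :=
    (((Real.continuous_sin.comp hlin).div_const 2).add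
      (continuous_const.mul (Real.continuous_cos.comp hlin))).pow 2
  -- Part 1
  have part1 : (∫ x in (0:ℝ)..1, (veps ε x) ^ 2 / x ^ 2) = |L| / 2 := by
    have e0 : EqOn (fun x => (veps ε x) ^ 2 / x ^ 2) (fun _ => (0:ℝ)) (uIcc 0 ε) := by
      intro x hx
      rw [uIcc_of_le hε0.le] at hx
      simp [hv0 x hx.2]
    have e1 : EqOn (fun x => (veps ε x) ^ 2 / x ^ 2) φ₁ (uIcc ε 1) := by
      rw [huIcc]
      intro x hx
      have hx0 := hpos x hx
      have hsq : Real.sqrt x ^ 2 = x := Real.sq_sqrt hx0.le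
      rcases eq_or_lt_of_le hx.1 with h | h
      · have hsin : Real.sin (π * Real.log x / L) = 0 := by
          rw [← h, ← hLdef, mul_div_assoc, div_self hL, mul_one, Real.sin_pi]
        simp [hv0 x (le_of_eq h.symm), hφ₁, hsin]
      · simp only [hveq x h, hφ₁, mul_pow, hsq]
        field_simp
    have i0 : IntervalIntegrable (fun x => (veps ε x) ^ 2 / x ^ 2) volume 0 ε := by
      refine (_root_.intervalIntegrable_const (c := (0:ℝ))).congr ?_
      intro x hx
      exact (e0 (uIoc_subset_uIcc hx)).symm
    have i1 : IntervalIntegrable (fun x => (veps ε x) ^ 2 / x ^ 2) volume ε 1 := by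
      refine (hφ₁cont.intervalIntegrable).congr ?_
      intro x hx
      exact (e1 (uIoc_subset_uIcc hx)).symm
    rw [← intervalIntegral.integral_add_adjacent_intervals i0 i1,
      intervalIntegral.integral_congr e0, intervalIntegral.integral_congr e1]
    simp only [intervalIntegral.integral_const, smul_zero, zero_add]
    rw [hφ₁, sub_int hε0 (fun t => Real.sin (π * t / L) ^ 2) hF1, ← hLdef,
      sinsq_int hL, habs]
  refine ⟨part1, ?_, ?_⟩
  -- Part 2
  · have e0 : ∀ᵐ x : ℝ, x ∈ uIoc 0 ε → (deriv (veps ε) x) ^ 2 = 0 := by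
      filter_upwards [hae] with x hne hx
      rw [uIoc_of_le hε0.le] at hx
      rw [hd0 x (lt_of_le_of_ne hx.2 hne)]
      norm_num
    have e1 : ∀ᵐ x : ℝ, x ∈ uIoc ε 1 → (deriv (veps ε) x) ^ 2 = φ₂ x := by
      refine Filter.Eventually.of_forall ?_
      intro x hx
      rw [uIoc_of_le hε1.le] at hx
      rw [hdG x hx.1, hGsq x (hε0.trans hx.1)]
    have i0 : IntervalIntegrable (fun x => (deriv (veps ε) x) ^ 2) volume 0 ε := by
      refine (_root_.intervalIntegrable_const (c := (0:ℝ))).congr_ae ?_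
      filter_upwards [ae_restrict_mem measurableSet_uIoc, ae_restrict_of_ae e0] with x hx h
      exact (h hx).symm
    have i1 : IntervalIntegrable (fun x => (deriv (veps ε) x) ^ 2) volume ε 1 := by
      refine (hφ₂cont.intervalIntegrable).congr_ae ?_
      filter_upwards [ae_restrict_mem measurableSet_uIoc, ae_restrict_of_ae e1] with x hx h
      exact (h hx).symm
    rw [← intervalIntegral.integral_add_adjacent_intervals i0 i1,
      intervalIntegral.integral_zero_ae e0, intervalIntegral.integral_congr_ae e1, zero_add]
    rw [hφ₂, sub_int hε0
      (fun t => (Real.sin (π * t / L) / 2 + (π / L) * Real.cos (π * t / L)) ^ 2)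
      hF2, ← hLdef, mix_int hL, habs, div_pow]
  -- Part 3
  · have e1 : ∀ᵐ x : ℝ, x ∈ uIoc ε 1 →
        (deriv (deriv (veps ε)) x) ^ 2 * x ^ 2 = (1/4 + (π/L)^2)^2 * φ₁ x := by
      refine Filter.Eventually.of_forall ?_
      intro x hx
      rw [uIoc_of_le hε1.le] at hx
      rw [hdH x hx.1, hHsq x (hε0.trans hx.1)]
    rw [intervalIntegral.integral_congr_ae e1, intervalIntegral.integral_const_mul,
      hφ₁, sub_int hε0 (fun t => Real.sin (π * t / L) ^ 2) hF1, ← hLdef,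
      sinsq_int hL, habs]
    have hLne : -L ≠ 0 := by simpa using hL
    field_simp
    ring
end
end
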